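/- arXiv:math/0301023 — 3 statements merged into one kernel-verified Lean document; each statement's English description precedes it below -/
import Mathlib

section
/- Let p be an odd prime. For all x, y ∈ ℚ_p, one has |x| < |y| if and only if y² + x²/p is a nonzero square in ℚ_p. -/
namespace PadicCell

lemma exists_sqrt_one_add (p : ℕ) [Fact p.Prime] (hp : p ≠ 2) (u : ℚ_[p])
    (hu : ‖u‖ < 1) : ∃ s : ℚ_[p], s ^ 2 = 1 + u := by
  have h1 : ‖(1 : ℚ_[p]) + u‖ ≤ 1 := by
    calc ‖(1 : ℚ_[p]) + u‖ ≤ max ‖(1:ℚ_[p])‖ ‖u‖ := Padic.nonarchimedean _ _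
    _ ≤ 1 := by simp [le_of_lt hu]
  set t : ℤ_[p] := ⟨1 + u, h1⟩ with ht
  set F : Polynomial ℤ_[p] := Polynomial.X ^ 2 - Polynomial.C t with hF
  have heval : F.eval 1 = 1 - t := by simp [hF]
  have hevn : ‖F.eval 1‖ = ‖u‖ := by
    rw [heval]
    have h2 : ((1 - t : ℤ_[p]) : ℚ_[p]) = -u := by
      rw [PadicInt.coe_sub, PadicInt.coe_one, ht]; show (1:ℚ_[p]) - (1 + u) = -u; ring
    rw [← PadicInt.padic_norm_e_of_padicInt, h2, norm_neg]
  have hderiv : F.derivative.eval 1 = 2 := by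
    simp [hF, one_add_one_eq_two]
  have h2 : ‖(2 : ℤ_[p])‖ = 1 := by
    rcases lt_or_eq_of_le (PadicInt.norm_le_one (2 : ℤ_[p])) with h | h
    · exfalso
      have hdvd := (PadicInt.norm_int_lt_one_iff_dvd (2 : ℤ)).1 (by exact_mod_cast h)
      have hple : (p : ℤ) ≤ 2 := Int.le_of_dvd (by norm_num) hdvd
      have hge : 2 ≤ p := (Fact.out : p.Prime).two_le
      omega
    · exact h
  have hnorm : ‖F.eval 1‖ < ‖F.derivative.eval 1‖ ^ 2 := by
    rw [hevn, hderiv, h2]; simpa using hu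
  obtain ⟨z, hz, -⟩ := hensels_lemma hnorm
  refine ⟨(z : ℚ_[p]), ?_⟩
  have hzt : z ^ 2 = t := by
    have h3 := hz
    simp [hF, sub_eq_zero] at h3
    exact h3
  have h4 := congrArg (fun w : ℤ_[p] => (w : ℚ_[p])) hzt
  push_cast [ht] at h4
  simpa using h4

theorem statement10 (p : ℕ) [Fact p.Prime] (hp : p ≠ 2) (x y : ℚ_[p]) :
    ‖x‖ < ‖y‖ ↔ ∃ z : ℚ_[p], z ≠ 0 ∧ y ^ 2 + x ^ 2 / (p : ℚ_[p]) = z ^ 2 := by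
  have hp0 : (p : ℚ_[p]) ≠ 0 := Nat.cast_ne_zero.2 (Fact.out : p.Prime).ne_zero
  have hp1 : (1 : ℝ) < p := by exact_mod_cast (Fact.out : p.Prime).one_lt
  have hppos : (0 : ℝ) < p := lt_trans one_pos hp1
  constructor
  · intro hlt
    have hy : y ≠ 0 := by
      intro h; rw [h, norm_zero] at hlt
      exact absurd hlt (not_lt.2 (norm_nonneg x))
    set u : ℚ_[p] := x ^ 2 / ((p : ℚ_[p]) * y ^ 2) with hu
    have hunorm : ‖u‖ < 1 := by
      rcases eq_or_ne x 0 with hx | hx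
      · simp [hu, hx]
      · have hv : y.valuation < x.valuation := by
          rw [Padic.norm_eq_zpow_neg_valuation hx, Padic.norm_eq_zpow_neg_valuation hy,
            zpow_lt_zpow_iff_right₀ hp1] at hlt
          omega
        have hequ : ‖u‖ = (p : ℝ) ^ (2 * y.valuation + 1 - 2 * x.valuation) := by
          rw [hu, norm_div, norm_mul, norm_pow, norm_pow, Padic.norm_eq_zpow_neg_valuation hx,
            Padic.norm_eq_zpow_neg_valuation hy, Padic.norm_p,
            ← zpow_natCast ((p:ℝ) ^ (-x.valuation)) 2, ← zpow_mul,
            ← zpow_natCast ((p:ℝ) ^ (-y.valuation)) 2, ← zpow_mul,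
            ← zpow_neg_one, ← zpow_add₀ (ne_of_gt hppos),
            ← zpow_sub₀ (ne_of_gt hppos)]
          ring_nf
        rw [hequ]
        exact zpow_lt_one_of_neg₀ hp1 (by omega)
    obtain ⟨s, hs⟩ := exists_sqrt_one_add p hp u hunorm
    have hs0 : s ≠ 0 := by
      intro h
      rw [h] at hs
      have hu1 : u = -1 := by linear_combination -hs
      rw [hu1] at hunorm
      simp at hunorm
    refine ⟨y * s, mul_ne_zero hy hs0, ?_⟩
    have : (y * s) ^ 2 = y ^ 2 * (1 + u) := by rw [mul_pow, hs]
    rw [this, hu]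
    field_simp
  · rintro ⟨z, hz0, heq⟩
    rcases eq_or_ne x 0 with hx | hx
    · have hy : y ≠ 0 := by
        intro h
        rw [hx, h] at heq
        simp at heq
        exact hz0 (pow_eq_zero_iff (by norm_num) |>.1 heq.symm)
      rw [hx, norm_zero]
      exact norm_pos_iff.2 hy
    · by_contra h
      push_neg at h
      have hxn : (0:ℝ) < ‖x‖ := norm_pos_iff.2 hx
      have hlt2 : ‖y ^ 2‖ < ‖x ^ 2 / (p : ℚ_[p])‖ := by
        rw [norm_div, norm_pow, norm_pow, Padic.norm_p, div_eq_mul_inv, inv_inv]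
        calc ‖y‖ ^ 2 ≤ ‖x‖ ^ 2 := by gcongr
        _ < ‖x‖ ^ 2 * p := by nlinarith [mul_pos (pow_pos hxn 2) (sub_pos.2 hp1)]
      have hmax : ‖y ^ 2 + x ^ 2 / (p : ℚ_[p])‖ = ‖x ^ 2 / (p : ℚ_[p])‖ := by
        rw [Padic.add_eq_max_of_ne (ne_of_lt hlt2), max_eq_right (le_of_lt hlt2)]
      rw [heq] at hmax
      have hzx : (p:ℝ) ^ (-(2 * z.valuation)) = (p:ℝ) ^ (1 - 2 * x.valuation) := by
        have hl : ‖z ^ 2‖ = (p:ℝ) ^ (-(2 * z.valuation)) := by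
          rw [norm_pow, Padic.norm_eq_zpow_neg_valuation hz0, ← zpow_natCast ((p:ℝ) ^ (-z.valuation)) 2,
            ← zpow_mul]
          ring_nf
        have hr : ‖x ^ 2 / (p : ℚ_[p])‖ = (p:ℝ) ^ (1 - 2 * x.valuation) := by
          rw [norm_div, norm_pow, Padic.norm_eq_zpow_neg_valuation hx, Padic.norm_p,
            ← zpow_natCast ((p:ℝ) ^ (-x.valuation)) 2, ← zpow_mul, ← zpow_neg_one,
            ← zpow_sub₀ (ne_of_gt hppos)]
          ring_nf
        rw [← hl, ← hr, hmax]
      have := zpow_right_injective₀ hppos (ne_of_gt hp1) hzx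
      omega

end PadicCell
end

section
/- Let μ ∈ K^× and n > 0. For k ∈ ℤ let S_k = {t ∈ K : v(t) = k and t ∈ μP_n}. Then S_k is empty unless k ≡ v(μ) mod n, and there is a positive rational number ε (depending only on K, μ and n) such that for every integer k with k ≡ v(μ) mod n, the Haar measure of S_k (normalized so that R has measure 1) equals ε · q^{−k}. -/
open MeasureTheory
open scoped Classical
open FirstOrder

namespace PadicCell

variable (K : Type) [NormedField K]

/-- `f` is the restricted analytic function associated to a restricted power series over `K`:
a power series whose coefficients tend to `0`, evaluated on the unit polydisc, `0` outside. -/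
def IsRestrictedAnalytic {m : ℕ} (f : (Fin m → K) → K) : Prop :=
  ∃ a : (Fin m →₀ ℕ) → K,
    (∀ ε : ℝ, 0 < ε → ∃ N : ℕ, ∀ i : Fin m →₀ ℕ, N ≤ i.sum (fun _ k => k) → ‖a i‖ < ε) ∧
    ∀ x : Fin m → K, f x =
      if ∀ j, ‖x j‖ ≤ 1 then ∑' i : Fin m →₀ ℕ, a i * ∏ j, x j ^ i j else 0

/-- The algebra `B_K` of basic subanalytic functions: the smallest `K`-algebra of functions
`K^m → K` (all `m`) containing the restricted analytic functions and the rational functions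
(extended by `0` where the denominator vanishes), closed under composition. -/
inductive IsBasicSubanalytic : ∀ {m : ℕ}, ((Fin m → K) → K) → Prop
  | restricted {m : ℕ} {f : (Fin m → K) → K} :
      IsRestrictedAnalytic K f → IsBasicSubanalytic f
  | ratfunc {m : ℕ} (f g : MvPolynomial (Fin m) K) :
      IsBasicSubanalytic (fun x =>
        if MvPolynomial.eval x g = 0 then 0 else MvPolynomial.eval x f / MvPolynomial.eval x g)
  | const {m : ℕ} (c : K) : IsBasicSubanalytic (fun _ : Fin m → K => c)
  | add {m : ℕ} {f g : (Fin m → K) → K} :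
      IsBasicSubanalytic f → IsBasicSubanalytic g → IsBasicSubanalytic (fun x => f x + g x)
  | mul {m : ℕ} {f g : (Fin m → K) → K} :
      IsBasicSubanalytic f → IsBasicSubanalytic g → IsBasicSubanalytic (fun x => f x * g x)
  | comp {m n : ℕ} {f : (Fin n → K) → K} {g : Fin n → (Fin m → K) → K} :
      IsBasicSubanalytic f → (∀ i, IsBasicSubanalytic (g i)) →
      IsBasicSubanalytic (fun x => f fun i => g i x)

/-- `P_n`, the set of `n`-th powers in `K^×`. -/
def Pn (n : ℕ) : Set K := {y | ∃ z : K, z ≠ 0 ∧ y = z ^ n}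

/-- The coset `λ·P_n`. -/
def cosetPn (lam : K) (n : ℕ) : Set K := {y | ∃ z ∈ Pn K n, y = lam * z}

/-- A subanalytic subset of `K^m`: a finite union of sets
`{x | f x = 0, g₁ x ∈ P_{n₁}, …, g_k x ∈ P_{n_k}}` with `f`, `gⱼ` basic subanalytic. -/
def IsSubanalytic {m : ℕ} (X : Set (Fin m → K)) : Prop :=
  ∃ (N : ℕ) (piece : Fin N → Set (Fin m → K)),
    X = (⋃ i, piece i) ∧
    ∀ i, ∃ (f : (Fin m → K) → K) (_ : IsBasicSubanalytic K f)
      (k : ℕ) (g : Fin k → (Fin m → K) → K) (n : Fin k → ℕ),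
      (∀ j, IsBasicSubanalytic K (g j) ∧ 0 < n j) ∧
      piece i = {x | f x = 0 ∧ ∀ j, g j x ∈ Pn K (n j)}

/-- A semialgebraic subset of `K^m`. -/
def IsSemialgebraic {m : ℕ} (X : Set (Fin m → K)) : Prop :=
  ∃ (N : ℕ) (piece : Fin N → Set (Fin m → K)),
    X = (⋃ i, piece i) ∧
    ∀ i, ∃ (f : MvPolynomial (Fin m) K) (k : ℕ)
      (g : Fin k → MvPolynomial (Fin m) K) (n : Fin k → ℕ),
      (∀ j, 0 < n j) ∧
      piece i = {x | MvPolynomial.eval x f = 0 ∧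
        ∀ j, MvPolynomial.eval x (g j) ∈ Pn K (n j)}

/-- A function `X → K`, `X ⊆ K^m`, is subanalytic if its graph is a subanalytic subset
of `K^{m+1}`. -/
def IsSubanalyticFunOn {m : ℕ} (X : Set (Fin m → K)) (f : (Fin m → K) → K) : Prop :=
  IsSubanalytic K {y : Fin (m + 1) → K | Fin.init y ∈ X ∧ y (Fin.last m) = f (Fin.init y)}

/-- A (total) subanalytic function `K^m → K`. -/
def IsSubanalyticFun {m : ℕ} (f : (Fin m → K) → K) : Prop :=
  IsSubanalyticFunOn K Set.univ f

/-- A semialgebraic function on `X ⊆ K^m`. -/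
def IsSemialgebraicFunOn {m : ℕ} (X : Set (Fin m → K)) (f : (Fin m → K) → K) : Prop :=
  IsSemialgebraic K {y : Fin (m + 1) → K | Fin.init y ∈ X ∧ y (Fin.last m) = f (Fin.init y)}

/-- A map `X → K^n`, `X ⊆ K^m`, is subanalytic if its graph is a subanalytic subset
of `K^{m+n}`. -/
def IsSubanalyticMapOn {m n : ℕ} (X : Set (Fin m → K)) (F : (Fin m → K) → Fin n → K) : Prop :=
  IsSubanalytic K {z : Fin (m + n) → K |
    (fun i => z (Fin.castAdd n i)) ∈ X ∧
    ∀ j, z (Fin.natAdd m j) = F (fun i => z (Fin.castAdd n i)) j}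

/-- Cells, relative to an abstract "norm-smaller-than" relation `lt`, coset sets `coset lam n`
(representing `λ·P_n`) and a notion `SubF` of (graphs of) subanalytic functions.
`IsCellGen F lt coset SubF A γ lam n` says that `A ⊆ F^{m+1}` is a cell with center `γ`
and coset `λ·P_n`.  A cell in `F` is a point or a set
`{t | |α| □₁ |t-γ| □₂ |β|, t-γ ∈ λP_n}`; a cell in `F^{m+2}` has a cell `D ⊆ F^{m+1}` as its
projection and is given by subanalytic data `α, β, γ` on the first `m+1` coordinates. -/
inductive IsCellGen (F : Type) [Field F] (lt : F → F → Prop) (coset : F → ℕ → Set F)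
    (SubF : ∀ m : ℕ, ((Fin m → F) → F) → Prop) :
    ∀ {m : ℕ}, Set (Fin (m + 1) → F) → ((Fin m → F) → F) → F → ℕ → Prop
  | point (c : F) :
      IsCellGen F lt coset SubF {t : Fin 1 → F | t 0 = c} (fun _ => c) 0 1
  | base (n : ℕ) (hn : 0 < n) (lam γ α β : F) (hα : α ≠ 0) (hβ : β ≠ 0) (b₁ b₂ : Bool) :
      IsCellGen F lt coset SubF
        {t : Fin 1 → F | (b₁ = true → lt α (t 0 - γ)) ∧ (b₂ = true → lt (t 0 - γ) β) ∧
          t 0 - γ ∈ coset lam n}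
        (fun _ => γ) lam n
  | succ {m : ℕ} {D : Set (Fin (m + 1) → F)} {γD : (Fin m → F) → F} {lamD : F} {nD : ℕ}
      (hD : IsCellGen F lt coset SubF D γD lamD nD)
      (n : ℕ) (hn : 0 < n) (lam : F) (α β γ : (Fin (m + 1) → F) → F)
      (hα : ∀ x, α x ≠ 0) (hβ : ∀ x, β x ≠ 0)
      (hαs : SubF (m + 1) α) (hβs : SubF (m + 1) β) (hγs : SubF (m + 1) γ)
      (b₁ b₂ : Bool) (A : Set (Fin (m + 2) → F))
      (hA : A = {y : Fin (m + 2) → F | Fin.init y ∈ D ∧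
        (b₁ = true → lt (α (Fin.init y)) (y (Fin.last (m + 1)) - γ (Fin.init y))) ∧
        (b₂ = true → lt (y (Fin.last (m + 1)) - γ (Fin.init y)) (β (Fin.init y))) ∧
        y (Fin.last (m + 1)) - γ (Fin.init y) ∈ coset lam n})
      (hproj : Fin.init '' A = D) :
      IsCellGen F lt coset SubF A γ lam n

/-- A subanalytic cell in `K^{m+1}` with center `γ` and coset `λ·P_n`. -/
def IsCellWith {m : ℕ} (A : Set (Fin (m + 1) → K)) (γ : (Fin m → K) → K) (lam : K)
    (n : ℕ) : Prop :=
  IsCellGen K (fun x y => ‖x‖ < ‖y‖) (cosetPn K) (fun _ f => IsSubanalyticFun K f) A γ lam n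

/-- The algebra `Ω_an` of simple `q`-exponential functions: the `ℚ`-algebra of functions
`K^m → ℚ` generated by `x ↦ v(h(x))` for `h` subanalytic and nonvanishing and by
`x ↦ |h'(x)| = q^{-v(h'(x))}` for `h'` subanalytic. -/
inductive MemOmegaAn (v : K → ℤ) (q : ℕ) : ∀ {m : ℕ}, ((Fin m → K) → ℚ) → Prop
  | val {m : ℕ} (h : (Fin m → K) → K) (hne : ∀ x, h x ≠ 0) (hs : IsSubanalyticFun K h) :
      MemOmegaAn v q (fun x => (v (h x) : ℚ))
  | nrm {m : ℕ} (h : (Fin m → K) → K) (hs : IsSubanalyticFun K h) :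
      MemOmegaAn v q (fun x => if h x = 0 then 0 else (q : ℚ) ^ (-(v (h x))))
  | const {m : ℕ} (c : ℚ) : MemOmegaAn v q (fun _ : Fin m → K => c)
  | add {m : ℕ} {f g : (Fin m → K) → ℚ} :
      MemOmegaAn v q f → MemOmegaAn v q g → MemOmegaAn v q (fun x => f x + g x)
  | mul {m : ℕ} {f g : (Fin m → K) → ℚ} :
      MemOmegaAn v q f → MemOmegaAn v q g → MemOmegaAn v q (fun x => f x * g x)

/-- A simple subset of `ℤ^n × K^m`. -/
def IsSimpleSet (v : K → ℤ) {n m : ℕ} (A : Set ((Fin n → ℤ) × (Fin m → K))) : Prop :=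
  IsSubanalytic K {y : Fin (n + m) → K |
    (∀ i : Fin n, y (Fin.castAdd m i) ≠ 0) ∧
    ((fun i : Fin n => v (y (Fin.castAdd m i)), fun j : Fin m => y (Fin.natAdd n j)) ∈ A)}

/-- A simple function `ℤ^n × K^m → ℤ` (one whose graph is a simple set). -/
def IsSimpleFun (v : K → ℤ) {n m : ℕ} (h : (Fin n → ℤ) × (Fin m → K) → ℤ) : Prop :=
  IsSimpleSet K v {zx : (Fin (n + 1) → ℤ) × (Fin m → K) |
    zx.1 (Fin.last n) = h (Fin.init zx.1, zx.2)}

/-- The algebra `Ω_simple`: the `ℚ`-algebra generated by the simple functions and the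
functions `q^h` with `h` simple. -/
inductive MemOmegaSimple (v : K → ℤ) (q : ℕ) :
    ∀ {n m : ℕ}, ((Fin n → ℤ) × (Fin m → K) → ℚ) → Prop
  | simple {n m : ℕ} (h : (Fin n → ℤ) × (Fin m → K) → ℤ) (hh : IsSimpleFun K v h) :
      MemOmegaSimple v q (fun zx => (h zx : ℚ))
  | qpow {n m : ℕ} (h : (Fin n → ℤ) × (Fin m → K) → ℤ) (hh : IsSimpleFun K v h) :
      MemOmegaSimple v q (fun zx => (q : ℚ) ^ (h zx))
  | const {n m : ℕ} (c : ℚ) : MemOmegaSimple v q (fun _ : (Fin n → ℤ) × (Fin m → K) => c)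
  | add {n m : ℕ} {f g : (Fin n → ℤ) × (Fin m → K) → ℚ} :
      MemOmegaSimple v q f → MemOmegaSimple v q g → MemOmegaSimple v q (fun zx => f zx + g zx)
  | mul {n m : ℕ} {f g : (Fin n → ℤ) × (Fin m → K) → ℚ} :
      MemOmegaSimple v q f → MemOmegaSimple v q g → MemOmegaSimple v q (fun zx => f zx * g zx)

/-- The data making a normed field `K` a `p`-adic field in the sense of the paper: a
valuation `v : K → ℤ` and the residue field cardinality `q > 1` with `|x| = q^{-v(x)}`,
`v` attaining the value `1`. -/
structure PadicData (K : Type) [NormedField K] where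
  q : ℕ
  one_lt_q : 1 < q
  v : K → ℤ
  norm_eq : ∀ x : K, x ≠ 0 → ‖x‖ = (q : ℝ) ^ (-(v x))
  exists_uniformizer : ∃ π : K, π ≠ 0 ∧ v π = 1
  /-- `q` is the cardinality of the residue field: the closed unit ball is the disjoint
  union of exactly `q` open unit balls. -/
  residue_card : ∃ c : Fin q → K, (∀ i, ‖c i‖ ≤ 1) ∧
    ∀ x : K, ‖x‖ ≤ 1 → ∃! i, ‖x - c i‖ < 1

/-- The analytic language `L_K`: function symbols `+`, `-`, `·` (binary), `⁻¹` (unary),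
a function symbol for each restricted analytic function over `K` (in each arity), and a
unary relation symbol `P_n` for each `n > 0`. -/
def LK : FirstOrder.Language where
  Functions n :=
    {f : (Fin n → K) → K // IsRestrictedAnalytic K f} ⊕
      (match n with
        | 1 => Unit
        | 2 => Fin 3
        | _ => Empty)
  Relations n :=
    match n with
    | 1 => {k : ℕ // 0 < k}
    | _ => Empty

/-- `K` as an `L_K`-structure, with the natural interpretations. -/
noncomputable instance LKStructure : (LK K).Structure K where
  funMap {n} s x :=
    match n, s, x with
    | _, Sum.inl f, x => f.1 x
    | 1, Sum.inr _, x => (x 0)⁻¹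
    | 2, Sum.inr i, x =>
        if i = (0 : Fin 3) then x 0 + x 1 else if i = (1 : Fin 3) then x 0 - x 1 else x 0 * x 1
    | 0, Sum.inr e, _ => e.elim
    | (_ + 3), Sum.inr e, _ => e.elim
  RelMap {n} r x :=
    match n, r, x with
    | 1, k, x => x 0 ∈ Pn K k.1

/-- The symbol for addition in `L_K`. -/
def addSym : (LK K).Functions 2 := Sum.inr (0 : Fin 3)
/-- The symbol for subtraction in `L_K`. -/
def subSym : (LK K).Functions 2 := Sum.inr (1 : Fin 3)
/-- The symbol for multiplication in `L_K`. -/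
def mulSym : (LK K).Functions 2 := Sum.inr (2 : Fin 3)
/-- The symbol for inversion in `L_K`. -/
def invSym : (LK K).Functions 1 := Sum.inr ()
/-- The relation symbol `P_n` in `L_K`. -/
def pnSym (n : ℕ) (hn : 0 < n) : (LK K).Relations 1 := ⟨n, hn⟩

variable (K₁ : Type) [Field K₁] [(LK K).Structure K₁]

/-- A subset of `K₁^m` is subanalytic if it is `L_K`-definable with parameters from `K₁`. -/
def IsSubanalytic1 {m : ℕ} (S : Set (Fin m → K₁)) : Prop :=
  Set.Definable (Set.univ : Set K₁) (LK K) S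

/-- A function `K₁^m → K₁` is subanalytic if its graph is `L_K`-definable with parameters. -/
def IsSubanalyticFun1 (m : ℕ) (g : (Fin m → K₁) → K₁) : Prop :=
  IsSubanalytic1 K K₁ {y : Fin (m + 1) → K₁ | y (Fin.last m) = g (Fin.init y)}

/-- A function `X → K₁`, `X ⊆ K₁^m`, is subanalytic if its graph is definable. -/
def IsSubanalyticFunOn1 {m : ℕ} (X : Set (Fin m → K₁)) (g : (Fin m → K₁) → K₁) : Prop :=
  IsSubanalytic1 K K₁ {y : Fin (m + 1) → K₁ | Fin.init y ∈ X ∧ y (Fin.last m) = g (Fin.init y)}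

/-- The interpretation in `K₁` of the set `P_n`, via the relation symbol `P_n`. -/
def Pn1 (n : ℕ) : Set K₁ :=
  {x | ∃ hn : 0 < n, Language.Structure.RelMap (L := LK K) (pnSym K n hn) ![x]}

/-- The coset `λ·P_n` in `K₁`. -/
def cosetPn1 (lam : K₁) (n : ℕ) : Set K₁ := {y | ∃ z ∈ Pn1 K K₁ n, y = lam * z}


/-- `X ⊆ K^m` admits dimension at least `d`: some `K`-linear image of `X` in `K^d` contains a
nonempty open subset of `K^d`. -/
def DimAtLeast (K : Type) [NormedField K] {m : ℕ} (X : Set (Fin m → K)) (d : ℕ) : Prop :=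
  ∃ π : (Fin m → K) →ₗ[K] (Fin d → K), ∃ U : Set (Fin d → K),
    U.Nonempty ∧ IsOpen U ∧ U ⊆ π '' X

/-- `dim X = d`: `d` is the largest integer such that some `K`-linear image of `X` in `K^d`
contains a nonempty open set. -/
def HasDim (K : Type) [NormedField K] {m : ℕ} (X : Set (Fin m → K)) (d : ℕ) : Prop :=
  DimAtLeast K X d ∧ ∀ d' : ℕ, DimAtLeast K X d' → d' ≤ d



section HenselAux

open Filter Finset Topology

lemma norm_eq_one_of_norm_sub_lt' {K : Type} [NormedDivisionRing K] [IsUltrametricDist K]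
    {u v : K} (hv : ‖v‖ = 1) (h : ‖u - v‖ < 1) : ‖u‖ = 1 := by
  have h1 : ‖u‖ ≤ 1 := by
    have h' := IsUltrametricDist.norm_add_le_max (u - v) v
    rw [show u - v + v = u from by abel, hv] at h'
    exact h'.trans (sup_le h.le le_rfl)
  rcases le_or_gt 1 ‖u‖ with h2 | h2
  · exact le_antisymm h1 h2
  · exfalso
    have h' := IsUltrametricDist.norm_add_le_max u (v - u)
    rw [show u + (v - u) = v from by abel, hv] at h'
    have h'' : ‖v - u‖ < 1 := by rw [norm_sub_rev]; exact h
    exact absurd (h'.trans_lt (sup_lt_iff.mpr ⟨h2, h''⟩)) (lt_irrefl _)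

theorem hensel_aux' {K : Type} [NormedField K] [IsUltrametricDist K] [CompleteSpace K]
    (hnat : ∀ j : ℕ, ‖(j : K)‖ ≤ 1) (m : ℕ) (hNK : ((m + 1 : ℕ) : K) ≠ 0)
    {x : K} (hx : ‖x‖ < ‖((m + 1 : ℕ) : K)‖ ^ 2) : ∃ w : K, w ^ (m + 1) = 1 + x := by
  set N : K := ((m + 1 : ℕ) : K) with hN
  set c : ℝ := ‖N‖ with hcdef
  have hc : 0 < c := norm_pos_iff.mpr hNK
  have hc1 : c ≤ 1 := hnat (m + 1)
  set a : K := 1 + x with ha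
  set t : ℝ := ‖x‖ / c ^ 2 with htdef
  have ht0 : 0 ≤ t := by positivity
  have ht1 : t < 1 := (div_lt_one (by positivity)).mpr hx
  have hxc : ‖x‖ < c := lt_of_lt_of_le hx (by nlinarith)
  set step : K → K := fun z => z - (z ^ (m + 1) - a) / (N * z ^ m) with hstep
  set zs : ℕ → K := fun k => step^[k] 1 with hzs
  have hzs0 : zs 0 = 1 := rfl
  have hzssucc : ∀ k, zs (k + 1) = step (zs k) := by
    intro k; simp only [hzs, Function.iterate_succ_apply']
  have main : ∀ z : K, ‖z - 1‖ < 1 → ∀ b : ℝ, 0 ≤ b → b ≤ ‖x‖ → ‖z ^ (m + 1) - a‖ ≤ b →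
      ‖step z - 1‖ < 1 ∧ ‖step z - z‖ ≤ b / c ∧ ‖(step z) ^ (m + 1) - a‖ ≤ b ^ 2 / c ^ 2 := by
    intro z hz1 b hb hbx hF
    have hznorm : ‖z‖ = 1 := norm_eq_one_of_norm_sub_lt' norm_one hz1
    have hz0 : z ≠ 0 := by
      intro h; rw [h] at hznorm; simp at hznorm
    have hd0 : N * z ^ m ≠ 0 := mul_ne_zero hNK (pow_ne_zero _ hz0)
    have hdnorm : ‖N * z ^ m‖ = c := by rw [norm_mul, norm_pow, hznorm, one_pow, mul_one]
    set w : K := -(z ^ (m + 1) - a) / (N * z ^ m) with hw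
    have hwnorm : ‖w‖ = ‖z ^ (m + 1) - a‖ / c := by rw [hw, norm_div, norm_neg, hdnorm]
    have hwb : ‖w‖ ≤ b / c := by
      rw [hwnorm]; exact (div_le_div_iff_of_pos_right hc).mpr hF
    have hw1 : ‖w‖ < 1 := by
      have h1 : ‖x‖ / c < c := (div_lt_iff₀ hc).mpr (by nlinarith)
      have h2 : b / c ≤ ‖x‖ / c := (div_le_div_iff_of_pos_right hc).mpr hbx
      calc ‖w‖ ≤ b / c := hwb
        _ ≤ ‖x‖ / c := h2
        _ < c := h1
        _ ≤ 1 := hc1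
    have hkey : step z = z + w := by rw [hstep, hw]; ring
    have hstepz : step z - z = w := by rw [hkey]; ring
    have hNw : N * z ^ m * w = -(z ^ (m + 1) - a) := by
      rw [hw, mul_comm]; exact div_mul_cancel₀ _ hd0
    have expand : (z + w) ^ (m + 1) - a
        = ∑ j ∈ range m, z ^ j * w ^ (m + 1 - j) * ((m + 1).choose j : K) := by
      have h1 := add_pow z w (m + 1)
      rw [sum_range_succ, sum_range_succ] at h1
      simp only [Nat.sub_self, Nat.add_sub_cancel_left, pow_zero, pow_one, Nat.choose_self,
        Nat.choose_succ_self_right, Nat.cast_one, mul_one] at h1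
      rw [h1, ← hN]
      linear_combination hNw
    refine ⟨?_, ?_, ?_⟩
    · rw [hkey]
      have h' := IsUltrametricDist.norm_add_le_max (z - 1) w
      rw [show z - 1 + w = z + w - 1 from by ring] at h'
      exact h'.trans_lt (sup_lt_iff.mpr ⟨hz1, hw1⟩)
    · rw [hstepz]; exact hwb
    · rw [hkey, expand]
      have hsum : ‖∑ j ∈ range m, z ^ j * w ^ (m + 1 - j) * ((m + 1).choose j : K)‖ ≤ ‖w‖ ^ 2 := by
        apply IsUltrametricDist.norm_sum_le_of_forall_le_of_nonneg (by positivity)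
        intro j hj
        have hjm : j < m := mem_range.mp hj
        rw [norm_mul, norm_mul, norm_pow, norm_pow, hznorm, one_pow, one_mul]
        calc ‖w‖ ^ (m + 1 - j) * ‖((m + 1).choose j : K)‖
            ≤ ‖w‖ ^ (m + 1 - j) * 1 :=
              mul_le_mul_of_nonneg_left (hnat _) (by positivity)
          _ = ‖w‖ ^ (m + 1 - j) := mul_one _
          _ ≤ ‖w‖ ^ 2 := pow_le_pow_of_le_one (norm_nonneg _) hw1.le (by omega)
      refine hsum.trans ?_
      calc ‖w‖ ^ 2 ≤ (b / c) ^ 2 := by gcongr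
        _ = b ^ 2 / c ^ 2 := by rw [div_pow]
  have inv : ∀ k, ‖zs k - 1‖ < 1 ∧ ‖zs k ^ (m + 1) - a‖ ≤ ‖x‖ * t ^ k := by
    intro k; induction k with
    | zero =>
      constructor
      · simp [hzs0]
      · rw [hzs0, one_pow, show (1 : K) - a = -x from by rw [ha]; ring, norm_neg, pow_zero,
          mul_one]
    | succ k ih =>
      obtain ⟨ih1, ih2⟩ := ih
      have hb0 : (0:ℝ) ≤ ‖x‖ * t ^ k := by positivity
      have hbx : ‖x‖ * t ^ k ≤ ‖x‖ := by
        have h'' : t ^ k ≤ 1 := pow_le_one₀ ht0 ht1.le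
        nlinarith [norm_nonneg x]
      obtain ⟨g1, g2, g3⟩ := main (zs k) ih1 _ hb0 hbx ih2
      refine ⟨by rw [hzssucc]; exact g1, ?_⟩
      rw [hzssucc]
      refine g3.trans ?_
      have h2k : t ^ (2 * k) ≤ t ^ k := pow_le_pow_of_le_one ht0 ht1.le (by omega)
      calc (‖x‖ * t ^ k) ^ 2 / c ^ 2 = ‖x‖ ^ 2 * t ^ (2 * k) / c ^ 2 := by
            rw [mul_pow, ← pow_mul]; ring
        _ ≤ ‖x‖ ^ 2 * t ^ k / c ^ 2 := by gcongr
        _ = ‖x‖ * t ^ (k + 1) := by rw [pow_succ, htdef]; ring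
  have hcauchy : CauchySeq zs := by
    apply cauchySeq_of_le_geometric t (‖x‖ / c) ht1
    intro k
    obtain ⟨ih1, ih2⟩ := inv k
    have hb0 : (0:ℝ) ≤ ‖x‖ * t ^ k := by positivity
    have hbx : ‖x‖ * t ^ k ≤ ‖x‖ := by
      have h'' : t ^ k ≤ 1 := pow_le_one₀ ht0 ht1.le
      nlinarith [norm_nonneg x]
    obtain ⟨-, g2, -⟩ := main (zs k) ih1 _ hb0 hbx ih2
    rw [dist_eq_norm, hzssucc, norm_sub_rev]
    calc ‖step (zs k) - zs k‖ ≤ ‖x‖ * t ^ k / c := g2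
      _ = ‖x‖ / c * t ^ k := by ring
  obtain ⟨L, hL⟩ := cauchySeq_tendsto_of_complete hcauchy
  have hFcont : Continuous fun z : K => z ^ (m + 1) - a := (continuous_pow _).sub continuous_const
  have h1 : Tendsto (fun k => zs k ^ (m + 1) - a) atTop (𝓝 (L ^ (m + 1) - a)) :=
    (hFcont.tendsto L).comp hL
  have h2 : Tendsto (fun k => zs k ^ (m + 1) - a) atTop (𝓝 0) := by
    apply squeeze_zero_norm (fun k => (inv k).2)
    have h3 := (tendsto_pow_atTop_nhds_zero_of_lt_one ht0 ht1).const_mul ‖x‖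
    simpa using h3
  have hz : L ^ (m + 1) - a = 0 := tendsto_nhds_unique h1 h2
  exact ⟨L, sub_eq_zero.mp hz⟩

end HenselAux

open scoped ENNReal NNReal Pointwise

set_option maxHeartbeats 2000000 in
theorem statement11 {p : ℕ} [Fact p.Prime] (K : Type) [NormedField K]
    [Algebra ℚ_[p] K] [FiniteDimensional ℚ_[p] K]
    (hcont : Continuous (algebraMap ℚ_[p] K)) (ctx : PadicData K)
    (μ0 : K) (hμ0 : μ0 ≠ 0) (n : ℕ) (hn : 0 < n)
    [MeasurableSpace K] [BorelSpace K]
    (μH : MeasureTheory.Measure K) [μH.IsAddHaarMeasure]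
    (hμH : μH {x : K | ‖x‖ ≤ 1} = 1) :
    (∀ k : ℤ, ¬ k ≡ ctx.v μ0 [ZMOD (n : ℤ)] →
      {t : K | t ∈ cosetPn K μ0 n ∧ ctx.v t = k} = ∅) ∧
    ∃ ε : ℚ, 0 < ε ∧ ∀ k : ℤ, k ≡ ctx.v μ0 [ZMOD (n : ℤ)] →
      μH {t : K | t ∈ cosetPn K μ0 n ∧ ctx.v t = k} =
        ENNReal.ofReal ((ε : ℝ) * (ctx.q : ℝ) ^ (-k)) := by
  classical
  obtain ⟨π, hπ0, hπv⟩ := ctx.exists_uniformizer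
  have hq1 : 1 < ctx.q := ctx.one_lt_q
  have hqR : (1:ℝ) < (ctx.q:ℝ) := by exact_mod_cast hq1
  have hq0 : (0:ℝ) < (ctx.q:ℝ) := by linarith
  have hqne1 : ((ctx.q:ℝ)) ≠ 1 := ne_of_gt hqR
  haveI : CharZero K := charZero_of_injective_algebraMap (algebraMap ℚ_[p] K).injective
  -- boundedness of the naturals
  have hnat : ∀ j : ℕ, ‖(j : K)‖ ≤ 1 := by
    by_contra hcon
    push_neg at hcon
    obtain ⟨j, hj⟩ := hcon
    have hb : Bornology.IsBounded ((algebraMap ℚ_[p] K) '' Metric.closedBall 0 1) :=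
      ((isCompact_closedBall (0:ℚ_[p]) 1).image hcont).isBounded
    obtain ⟨r, hr⟩ := (Metric.isBounded_iff_subset_closedBall 0).mp hb
    obtain ⟨i, hi⟩ := pow_unbounded_of_one_lt r hj
    have hji : ((j : ℚ_[p]) ^ i) ∈ Metric.closedBall (0:ℚ_[p]) 1 := by
      rw [Metric.mem_closedBall, dist_zero_right, norm_pow]
      apply pow_le_one₀ (norm_nonneg _)
      have h' := Padic.norm_int_le_one (p := p) (j : ℤ)
      push_cast at h'
      exact h'
    have h2 := hr ⟨_, hji, rfl⟩
    rw [Metric.mem_closedBall, dist_zero_right, map_pow, map_natCast, norm_pow] at h2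
    linarith
  haveI : IsUltrametricDist K :=
    IsUltrametricDist.isUltrametricDist_of_forall_norm_natCast_le_one hnat
  haveI : ContinuousSMul ℚ_[p] K := by
    refine ⟨?_⟩
    have h' : (fun q : ℚ_[p] × K => q.1 • q.2) = fun q : ℚ_[p] × K =>
        algebraMap ℚ_[p] K q.1 * q.2 := by
      funext q; rw [Algebra.smul_def]
    rw [h']
    exact (hcont.comp continuous_fst).mul continuous_snd
  haveI : CompleteSpace K := FiniteDimensional.complete ℚ_[p] K
  let e : K ≃L[Padic p] (Fin (Module.finrank (Padic p) K) → Padic p) :=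
    ContinuousLinearEquiv.ofFinrankEq (by rw [Module.finrank_fin_fun])
  haveI : LocallyCompactSpace K := e.toHomeomorph.locallyCompactSpace_iff.mpr inferInstance
  haveI : SecondCountableTopology K := e.toHomeomorph.isEmbedding.secondCountableTopology
  -- valuation/norm dictionary
  have vEq : ∀ y : K, y ≠ 0 → ∀ k : ℤ, (ctx.v y = k ↔ ‖y‖ = (ctx.q:ℝ) ^ (-k)) := by
    intro y hy k
    rw [ctx.norm_eq y hy]
    constructor
    · rintro rfl; rfl
    · intro h
      have h2 := zpow_right_injective₀ hq0 hqne1 h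
      omega
  have hπn : ‖π‖ = (ctx.q:ℝ) ^ (-(1:ℤ)) := by
    rw [ctx.norm_eq π hπ0, hπv]
  -- balls
  set B : ℤ → Set K := fun j => {y : K | ‖y‖ ≤ (ctx.q:ℝ) ^ (-j)} with hB
  have hBmem : ∀ (j : ℤ) (y : K), y ∈ B j ↔ ‖y‖ ≤ (ctx.q:ℝ) ^ (-j) := fun j y => Iff.rfl
  have hBclosed : ∀ j, IsClosed (B j) := fun j => isClosed_le continuous_norm continuous_const
  have hBmeas : ∀ j, MeasurableSet (B j) := fun j => (hBclosed j).measurableSet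
  have hB0 : B 0 = {y : K | ‖y‖ ≤ 1} := by
    simp only [hB, neg_zero, zpow_zero]
  have hμB0 : μH (B 0) = 1 := by rw [hB0]; exact hμH
  have hlt : ∀ (y : K) (j : ℤ), ‖y‖ < (ctx.q:ℝ) ^ (-j) ↔ ‖y‖ ≤ (ctx.q:ℝ) ^ (-(j+1)) := by
    intro y j
    rcases eq_or_ne y 0 with rfl | hy
    · simp only [norm_zero]
      constructor
      · intro _; positivity
      · intro _; positivity
    · rw [ctx.norm_eq y hy, zpow_lt_zpow_iff_right₀ hqR, zpow_le_zpow_iff_right₀ hqR]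
      omega
  have hBmono : ∀ j j' : ℤ, j ≤ j' → B j' ⊆ B j := by
    intro j j' hj y hy
    rw [hBmem] at hy ⊢
    refine hy.trans ?_
    exact (zpow_le_zpow_iff_right₀ hqR).mpr (by omega)
  have hlt1 : ∀ y : K, ‖y‖ < 1 ↔ ‖y‖ ≤ (ctx.q:ℝ) ^ (-(1:ℤ)) := by
    intro y
    have h' := hlt y 0
    rw [neg_zero, zpow_zero, show ((0:ℤ)+1) = (1:ℤ) from by norm_num] at h'
    exact h'
  -- smul membership
  have smul_mem : ∀ (cc : K), cc ≠ 0 → ∀ (S : Set K) (y : K), (y ∈ cc • S ↔ cc⁻¹ * y ∈ S) := by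
    intro cc hcc S y
    constructor
    · rintro ⟨z, hz, rfl⟩
      simpa [smul_eq_mul, inv_mul_cancel_left₀ hcc] using hz
    · intro h
      exact ⟨cc⁻¹ * y, h, by show cc * (cc⁻¹ * y) = y; exact mul_inv_cancel_left₀ hcc y⟩
  have hsmul_eq : ∀ (cc : K), cc ≠ 0 → ∀ S : Set K, (fun y : K => cc⁻¹ * y) ⁻¹' S = cc • S := by
    intro cc hcc S; ext y; rw [Set.mem_preimage, smul_mem cc hcc]
  have smul_ball : ∀ (cc : K), cc ≠ 0 → ∀ j, cc • B j = B (j + ctx.v cc) := by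
    intro cc hcc j
    ext y
    rw [smul_mem cc hcc, hBmem, hBmem, norm_mul, norm_inv, ctx.norm_eq cc hcc]
    have hrw : (ctx.q:ℝ) ^ (-(j + ctx.v cc)) = ((ctx.q:ℝ) ^ (-(ctx.v cc))) * (ctx.q:ℝ) ^ (-j) := by
      rw [← zpow_add₀ (ne_of_gt hq0)]; congr 1; ring
    rw [hrw, inv_mul_le_iff₀ (zpow_pos hq0 _)]
  -- vadd facts
  have vadd_eq : ∀ (aa : K) (S : Set K), aa +ᵥ S = (fun y : K => y - aa) ⁻¹' S := by
    intro aa S; ext y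
    rw [Set.mem_vadd_set_iff_neg_vadd_mem, Set.mem_preimage, vadd_eq_add, neg_add_eq_sub]
  -- the recurrence
  have hrec : ∀ j : ℤ, μH (B j) = ctx.q * μH (B (j + 1)) := by
    intro j
    obtain ⟨cf, hcf1, hcfU⟩ := ctx.residue_card
    have hπj0 : π ^ j ≠ 0 := zpow_ne_zero _ hπ0
    have hπjn : ‖π ^ j‖ = (ctx.q:ℝ) ^ (-j) := by
      rw [norm_zpow, hπn, ← zpow_mul]; congr 1; ring
    have hπjninv : ‖(π ^ j)⁻¹‖ = (ctx.q:ℝ) ^ j := by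
      rw [norm_inv, hπjn, ← zpow_neg]; congr 1; ring
    have hkeynorm : ∀ (y : K) (i : Fin ctx.q),
        ‖(π ^ j)⁻¹ * y - cf i‖ = (ctx.q:ℝ) ^ j * ‖y - π ^ j * cf i‖ := by
      intro y i
      have h' : (π ^ j)⁻¹ * y - cf i = (π ^ j)⁻¹ * (y - π ^ j * cf i) := by
        field_simp
      rw [h', norm_mul, hπjninv]
    have cover : B j = ⋃ i : Fin ctx.q, ((π ^ j * cf i) +ᵥ B (j + 1)) := by
      ext y
      simp only [Set.mem_iUnion]
      constructor
      · intro hy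
        rw [hBmem] at hy
        have h1 : ‖(π ^ j)⁻¹ * y‖ ≤ 1 := by
          rw [norm_mul, hπjninv]
          calc (ctx.q:ℝ) ^ j * ‖y‖ ≤ (ctx.q:ℝ) ^ j * (ctx.q:ℝ) ^ (-j) := by
                have := zpow_pos hq0 j; nlinarith
            _ = 1 := by rw [← zpow_add₀ (ne_of_gt hq0)]; simp
        obtain ⟨i, hi, -⟩ := hcfU _ h1
        refine ⟨i, ?_⟩
        rw [vadd_eq, Set.mem_preimage, hBmem]
        have h2 : ‖(π ^ j)⁻¹ * y - cf i‖ ≤ (ctx.q:ℝ) ^ (-(1:ℤ)) := (hlt1 _).mp hi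
        rw [hkeynorm] at h2
        have h3 := zpow_pos hq0 j
        rw [show -(j+1) = -(1:ℤ) + -j from by ring, zpow_add₀ (ne_of_gt hq0)]
        calc ‖y - π ^ j * cf i‖
            = ((ctx.q:ℝ) ^ j)⁻¹ * ((ctx.q:ℝ) ^ j * ‖y - π ^ j * cf i‖) := by field_simp
          _ ≤ ((ctx.q:ℝ) ^ j)⁻¹ * (ctx.q:ℝ) ^ (-(1:ℤ)) := by
              have h4 : (0:ℝ) < ((ctx.q:ℝ) ^ j)⁻¹ := by positivity
              nlinarith
          _ = (ctx.q:ℝ) ^ (-(1:ℤ)) * (ctx.q:ℝ) ^ (-j) := by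
              rw [← zpow_neg]; ring
      · rintro ⟨i, hi⟩
        rw [vadd_eq, Set.mem_preimage, hBmem] at hi
        rw [hBmem]
        have h5 : ‖π ^ j * cf i‖ ≤ (ctx.q:ℝ) ^ (-j) := by
          rw [norm_mul, hπjn]
          have h6 := zpow_pos hq0 (-j)
          nlinarith [hcf1 i, norm_nonneg (cf i)]
        have h7 := IsUltrametricDist.norm_add_le_max (y - π ^ j * cf i) (π ^ j * cf i)
        rw [show y - π ^ j * cf i + π ^ j * cf i = y from by abel] at h7
        refine h7.trans (sup_le ?_ h5)
        refine hi.trans ?_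
        exact (zpow_le_zpow_iff_right₀ hqR).mpr (by omega)
    have disj : Pairwise (Function.onFun Disjoint
        (fun i : Fin ctx.q => ((π ^ j * cf i) +ᵥ B (j + 1)))) := by
      intro i1 i2 hne
      rw [Function.onFun, Set.disjoint_left]
      intro y hy1 hy2
      have hmem : ∀ i : Fin ctx.q, y ∈ (π ^ j * cf i) +ᵥ B (j + 1) →
          ‖(π ^ j)⁻¹ * y - cf i‖ < 1 := by
        intro i hi
        rw [vadd_eq, Set.mem_preimage, hBmem] at hi
        rw [hkeynorm]
        have h2 : (ctx.q:ℝ) ^ j * ‖y - π ^ j * cf i‖ ≤ (ctx.q:ℝ) ^ (-(1:ℤ)) := by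
          have h3 : (ctx.q:ℝ) ^ j * ‖y - π ^ j * cf i‖ ≤ (ctx.q:ℝ) ^ j * (ctx.q:ℝ) ^ (-(j+1)) := by
            have := zpow_pos hq0 j; nlinarith
          refine h3.trans (le_of_eq ?_)
          rw [← zpow_add₀ (ne_of_gt hq0)]; congr 1; ring
        refine lt_of_le_of_lt h2 ?_
        rw [show (1:ℝ) = (ctx.q:ℝ) ^ (0:ℤ) from by simp]
        exact (zpow_lt_zpow_iff_right₀ hqR).mpr (by omega)
      have hy1' := hmem i1 hy1
      have hy2' := hmem i2 hy2
      have hynorm : ‖(π ^ j)⁻¹ * y‖ ≤ 1 := by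
        have h8 := IsUltrametricDist.norm_add_le_max ((π ^ j)⁻¹ * y - cf i1) (cf i1)
        rw [show (π ^ j)⁻¹ * y - cf i1 + cf i1 = (π ^ j)⁻¹ * y from by abel] at h8
        exact h8.trans (sup_le hy1'.le (hcf1 i1))
      obtain ⟨i0, hi0, huniq⟩ := hcfU _ hynorm
      exact hne ((huniq i1 hy1').trans (huniq i2 hy2').symm)
    have hmeas' : ∀ i : Fin ctx.q, MeasurableSet ((π ^ j * cf i) +ᵥ B (j + 1)) := by
      intro i
      rw [vadd_eq]
      exact (hBmeas (j+1)).preimage ((continuous_id.sub continuous_const).measurable)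
    rw [cover, measure_iUnion disj hmeas', tsum_fintype]
    have hval : ∀ i : Fin ctx.q, μH ((π ^ j * cf i) +ᵥ B (j + 1)) = μH (B (j + 1)) := by
      intro i; exact measure_vadd μH _ _
    rw [Finset.sum_congr rfl (fun i _ => hval i), Finset.sum_const, Finset.card_univ,
      Fintype.card_fin, nsmul_eq_mul]
  -- value of ball measures
  have hqE0 : (ctx.q : ℝ≥0∞) ≠ 0 := by
    simp only [ne_eq, Nat.cast_eq_zero]; omega
  have hqET : (ctx.q : ℝ≥0∞) ≠ ⊤ := ENNReal.natCast_ne_top _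
  have hofq : ∀ i : ℤ, (ctx.q:ℝ≥0∞) * ENNReal.ofReal ((ctx.q:ℝ) ^ i)
      = ENNReal.ofReal ((ctx.q:ℝ) ^ (i+1)) := by
    intro i
    rw [← ENNReal.ofReal_natCast ctx.q, ← ENNReal.ofReal_mul (Nat.cast_nonneg _)]
    congr 1
    have h1 := zpow_add₀ (ne_of_gt hq0) 1 i
    rw [zpow_one] at h1
    rw [show i + 1 = 1 + i from by ring, h1]
  have hBval : ∀ j : ℤ, μH (B j) = ENNReal.ofReal ((ctx.q:ℝ) ^ (-j)) := by
    intro j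
    induction j using Int.induction_on with
    | zero => rw [hμB0]; simp
    | succ i ih =>
      have h1 := hrec i
      rw [ih] at h1
      apply (ENNReal.mul_right_inj hqE0 hqET).mp
      rw [← h1, hofq (-((i:ℤ)+1))]
      congr 2
      ring
    | pred i ih =>
      have h1 := hrec (-(i:ℤ) - 1)
      rw [show (-(i:ℤ) - 1 + 1) = -(i:ℤ) from by ring, ih] at h1
      rw [h1, hofq (-(-(i:ℤ)))]
      congr 2
      ring
  -- the scaling property
  have scale : ∀ (cc : K), cc ≠ 0 → ∀ S : Set K, MeasurableSet S →
      μH (cc • S) = ENNReal.ofReal ‖cc‖ * μH S := by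
    intro cc hcc
    have hcont1 : Continuous (fun y : K => cc⁻¹ * y) := continuous_const.mul continuous_id
    have hcont2 : Continuous (fun y : K => cc * y) := continuous_const.mul continuous_id
    let eq1 : K ≃+ K :=
      { toFun := fun y => cc⁻¹ * y
        invFun := fun y => cc * y
        left_inv := fun y => by field_simp
        right_inv := fun y => by field_simp
        map_add' := fun a b => mul_add _ _ _ }
    haveI : (μH.map ⇑eq1).IsAddHaarMeasure := eq1.isAddHaarMeasure_map μH hcont1 hcont2
    have huniq := Measure.isAddLeftInvariant_eq_smul (μH.map ⇑eq1) μH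
    have happ : ∀ S : Set K, MeasurableSet S → μH.map (⇑eq1) S = μH (cc • S) := by
      intro S hS
      rw [Measure.map_apply (show Measurable (⇑eq1) from hcont1.measurable) hS]
      congr 1
      exact hsmul_eq cc hcc S
    have hfactor : (((μH.map ⇑eq1).addHaarScalarFactor μH : ℝ≥0) : ℝ≥0∞)
        = ENNReal.ofReal ‖cc‖ := by
      have h0 := happ (B 0) (hBmeas 0)
      rw [huniq] at h0
      rw [smul_ball cc hcc 0, zero_add, hBval] at h0
      simp only [Measure.smul_apply, ENNReal.smul_def, smul_eq_mul, hμB0, mul_one] at h0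
      rw [ctx.norm_eq cc hcc]
      exact h0
    intro S hS
    rw [← happ S hS, huniq]
    simp only [Measure.smul_apply, ENNReal.smul_def, smul_eq_mul, hfactor]
  -- the set T of n-th powers of norm one
  set T : Set K := {y : K | y ∈ Pn K n ∧ ‖y‖ = 1} with hTdef
  have hnK : ((n:ℕ) : K) ≠ 0 := Nat.cast_ne_zero.mpr hn.ne'
  have hn2le : ‖((n:ℕ):K)‖ ^ 2 ≤ 1 := by
    have := hnat n
    nlinarith [norm_nonneg ((n:ℕ):K)]
  have hT1 : (1:K) ∈ T := ⟨⟨1, one_ne_zero, (one_pow n).symm⟩, norm_one⟩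
  have hTopen : IsOpen T := by
    rw [Metric.isOpen_iff]
    rintro y ⟨⟨z, hz0, rfl⟩, hy1⟩
    refine ⟨‖((n:ℕ):K)‖ ^ 2, pow_pos (norm_pos_iff.mpr hnK) 2, ?_⟩
    intro u hu
    rw [Metric.mem_ball, dist_eq_norm] at hu
    obtain ⟨m, hm⟩ : ∃ m, n = m + 1 := ⟨n - 1, by omega⟩
    have hy0 : z ^ n ≠ 0 := pow_ne_zero _ hz0
    have hxnorm : ‖(z ^ n)⁻¹ * (u - z ^ n)‖ < ‖((n:ℕ):K)‖ ^ 2 := by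
      rw [norm_mul, norm_inv, hy1, inv_one, one_mul]; exact hu
    have hxnorm1 : ‖(z ^ n)⁻¹ * (u - z ^ n)‖ < 1 := lt_of_lt_of_le hxnorm hn2le
    have hgoal1 : ((m + 1 : ℕ) : K) ≠ 0 := by rw [← hm]; exact hnK
    have hgoal2 : ‖(z ^ n)⁻¹ * (u - z ^ n)‖ < ‖((m + 1 : ℕ) : K)‖ ^ 2 := by rw [← hm]; exact hxnorm
    obtain ⟨w, hw⟩ := hensel_aux' hnat m hgoal1 hgoal2
    have hpow : w ^ n = w ^ (m + 1) := by rw [hm]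
    have hwn : w ^ n = 1 + (z ^ n)⁻¹ * (u - z ^ n) := by rw [hpow]; exact hw
    have hw0 : w ≠ 0 := by
      intro h0
      rw [h0, zero_pow hn.ne'] at hwn
      have h1 : ‖(1 + (z ^ n)⁻¹ * (u - z ^ n))‖ = 1 := by
        apply norm_eq_one_of_norm_sub_lt' norm_one
        simpa using hxnorm1
      rw [← hwn] at h1
      simp at h1
    have hun : u = (z * w) ^ n := by
      rw [mul_pow, hwn]
      field_simp
      ring
    have hunorm : ‖u‖ = 1 := by
      apply norm_eq_one_of_norm_sub_lt' hy1
      exact lt_of_lt_of_le hu hn2le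
    exact ⟨⟨z * w, mul_ne_zero hz0 hw0, hun⟩, hunorm⟩
  have hTmeas : MeasurableSet T := hTopen.measurableSet
  have hτpos : 0 < μH T := hTopen.measure_pos μH ⟨1, hT1⟩
  have hTsub : T ⊆ B 0 := by
    rintro y ⟨-, hy1⟩
    rw [hBmem]
    simp [hy1]
  have hτle : μH T ≤ 1 := hμB0 ▸ measure_mono hTsub
  have hτtop : μH T ≠ ⊤ := by
    intro h
    rw [h] at hτle
    exact (by simp : ¬ (⊤ : ℝ≥0∞) ≤ 1) hτle
  -- multiplicative structure of T
  have hTmul : ∀ a b : K, a ∈ T → b ∈ T → a * b ∈ T := by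
    rintro a b ⟨⟨za, hza, rfl⟩, ha1⟩ ⟨⟨zb, hzb, rfl⟩, hb1⟩
    exact ⟨⟨za * zb, mul_ne_zero hza hzb, by rw [mul_pow]⟩, by rw [norm_mul, ha1, hb1, mul_one]⟩
  have hTinv : ∀ a : K, a ∈ T → a⁻¹ ∈ T := by
    rintro a ⟨⟨za, hza, rfl⟩, ha1⟩
    exact ⟨⟨za⁻¹, inv_ne_zero hza, by rw [inv_pow]⟩, by rw [norm_inv, ha1, inv_one]⟩
  have hTne : ∀ a : K, a ∈ T → a ≠ 0 := by
    rintro a ⟨-, ha1⟩ rfl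
    simp at ha1
  -- the unit sphere U
  set U : Set K := {y : K | ‖y‖ = 1} with hUdef
  have hUmem : ∀ y : K, y ∈ U ↔ ‖y‖ = 1 := fun y => Iff.rfl
  have hUne : ∀ y : K, y ∈ U → y ≠ 0 := by
    rintro y hy rfl; rw [hUmem] at hy; simp at hy
  have hUsub : U = B 0 \ B 1 := by
    ext y
    rw [hUmem, Set.mem_diff, hBmem, hBmem]
    rw [neg_zero, zpow_zero]
    constructor
    · intro h
      refine ⟨le_of_eq h, fun hcon => ?_⟩
      have h3 := (hlt1 y).mpr hcon
      rw [h] at h3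
      exact lt_irrefl _ h3
    · rintro ⟨h1, h2⟩
      by_contra hne
      exact h2 ((hlt1 y).mp (lt_of_le_of_ne h1 hne))
  have hμU : μH U = ENNReal.ofReal (1 - (ctx.q:ℝ)⁻¹) := by
    rw [hUsub, measure_diff (hBmono 0 1 (by omega)) (hBmeas 1).nullMeasurableSet
      (by rw [hBval]; exact ENNReal.ofReal_ne_top), hμB0, hBval]
    rw [← ENNReal.ofReal_one, ← ENNReal.ofReal_sub _ (by positivity)]
    congr 1
    rw [zpow_neg, zpow_one]
  have hμUpos : 0 < μH U := by
    rw [hμU]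
    apply ENNReal.ofReal_pos.mpr
    have : (ctx.q:ℝ)⁻¹ < 1 := by
      rw [inv_lt_one_iff₀]; right; exact hqR
    linarith
  -- cosets of T in U
  have hcoset_meas : ∀ u : K, u ≠ 0 → MeasurableSet (u • T) := by
    intro u hu
    rw [← hsmul_eq u hu]
    exact hTmeas.preimage (continuous_const.mul continuous_id).measurable
  have hcoset_val : ∀ u : K, u ∈ U → μH (u • T) = μH T := by
    intro u hu
    rw [scale u (hUne u hu) T hTmeas, (hUmem u).mp hu, ENNReal.ofReal_one, one_mul]
  have hcoset_sub : ∀ u : K, u ∈ U → u • T ⊆ U := by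
    rintro u hu y ⟨s, hs, rfl⟩
    show ‖u • s‖ = 1
    rw [smul_eq_mul, norm_mul, (hUmem u).mp hu, hs.2, mul_one]
  have hsubcoset : ∀ u u' s s' : K, u ≠ 0 → s ∈ T → s' ∈ T → u * s = u' * s' →
      u • T ⊆ u' • T := by
    rintro u u' s s' hu hsT hs'T heq y ⟨r, hr, rfl⟩
    have hs0 := hTne s hsT
    refine ⟨s' * s⁻¹ * r, hTmul _ _ (hTmul _ _ hs'T (hTinv _ hsT)) hr, ?_⟩
    show u' * (s' * s⁻¹ * r) = u • r
    rw [smul_eq_mul]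
    have h1 : u' * (s' * s⁻¹ * r) = (u' * s') * s⁻¹ * r := by ring
    rw [h1, ← heq, mul_inv_cancel_right₀ hs0]
  have hdichot : ∀ u : K, u ∈ U → ∀ u' : K, u' ∈ U → (u • T ∩ u' • T).Nonempty →
      u • T = u' • T := by
    rintro u hu u' hu' ⟨y, ⟨s, hsT, hys⟩, ⟨s', hs'T, hys'⟩⟩
    have heq : u * s = u' * s' := by
      have h1 : u • s = y := hys
      have h2 : u' • s' = y := hys'
      rw [smul_eq_mul] at h1 h2
      rw [h1, h2]
    apply Set.Subset.antisymm
    · exact hsubcoset u u' s s' (hUne u hu) hsT hs'T heq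
    · exact hsubcoset u' u s' s (hUne u' hu') hs'T hsT heq.symm
  set C : Set (Set K) := (fun u : K => u • T) '' U with hCdef
  have hCval : ∀ c ∈ C, μH c = μH T := by
    rintro c ⟨u, hu, rfl⟩
    exact hcoset_val u hu
  have hCmeas : ∀ c ∈ C, MeasurableSet c := by
    rintro c ⟨u, hu, rfl⟩
    exact hcoset_meas u (hUne u hu)
  have hCsub : ∀ c ∈ C, c ⊆ U := by
    rintro c ⟨u, hu, rfl⟩
    exact hcoset_sub u hu
  have hCdisj : ∀ c ∈ C, ∀ c' ∈ C, c ≠ c' → Disjoint c c' := by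
    rintro c ⟨u, hu, rfl⟩ c' ⟨u', hu', rfl⟩ hne
    rw [Set.disjoint_iff_inter_eq_empty]
    by_contra hcon
    exact hne (hdichot u hu u' hu' (Set.nonempty_iff_ne_empty.mpr hcon))
  have hCbound : ∀ s : Finset (Set K), (↑s ⊆ C) → (s.card : ℝ≥0∞) * μH T ≤ 1 := by
    intro s hs
    have hdisj : (↑s : Set (Set K)).PairwiseDisjoint id := by
      intro c hc c' hc' hne
      exact hCdisj c (hs hc) c' (hs hc') hne
    have hmeas : ∀ c ∈ s, MeasurableSet c := fun c hc => hCmeas c (hs hc)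
    have h1 : μH (⋃ c ∈ s, c) = ∑ c ∈ s, μH c := measure_biUnion_finset hdisj hmeas
    have h2 : ∑ c ∈ s, μH c = s.card * μH T := by
      rw [Finset.sum_congr rfl (fun c hc => hCval c (hs hc)), Finset.sum_const, nsmul_eq_mul]
    have h3 : (⋃ c ∈ s, c) ⊆ B 0 := by
      intro y hy
      simp only [Set.mem_iUnion] at hy
      obtain ⟨c, hc, hyc⟩ := hy
      have := hCsub c (hs hc) hyc
      rw [hUmem] at this
      rw [hBmem]
      simp [this]
    calc (s.card : ℝ≥0∞) * μH T = μH (⋃ c ∈ s, c) := by rw [h1, h2]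
      _ ≤ μH (B 0) := measure_mono h3
      _ = 1 := hμB0
  have hCfin : C.Finite := by
    by_contra hinf
    have hinf' : C.Infinite := hinf
    obtain ⟨N, hN⟩ := ENNReal.exists_nat_gt
      (ENNReal.div_lt_top ENNReal.one_ne_top hτpos.ne').ne
    obtain ⟨s, hsC, hscard⟩ := hinf'.exists_subset_card_eq N
    have h1 := hCbound s hsC
    rw [hscard] at h1
    have h2 : (1:ℝ≥0∞) < N * μH T := by
      calc (1:ℝ≥0∞) = 1 / μH T * μH T := (ENNReal.div_mul_cancel hτpos.ne' hτtop).symm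
        _ < N * μH T := by
          exact ENNReal.mul_lt_mul_left hτpos.ne' hτtop hN
    exact absurd (h2.trans_le h1) (lt_irrefl _)
  set sC := hCfin.toFinset with hsCdef
  have hsCmem : ∀ c, c ∈ sC ↔ c ∈ C := fun c => hCfin.mem_toFinset
  set M := sC.card with hMdef
  have hUcup : U = ⋃ c ∈ sC, c := by
    apply Set.Subset.antisymm
    · intro u hu
      simp only [Set.mem_iUnion]
      refine ⟨u • T, (hsCmem _).mpr ⟨u, hu, rfl⟩, ⟨1, hT1, ?_⟩⟩
      show u • (1:K) = u
      rw [smul_eq_mul, mul_one]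
    · intro y hy
      simp only [Set.mem_iUnion] at hy
      obtain ⟨c, hc, hyc⟩ := hy
      exact hCsub c ((hsCmem c).mp hc) hyc
  have hcount : μH U = M * μH T := by
    rw [hUcup, measure_biUnion_finset ?hd ?hm]
    · rw [Finset.sum_congr rfl (fun c hc => hCval c ((hsCmem c).mp hc)), Finset.sum_const,
        nsmul_eq_mul]
    case hd =>
      intro c hc c' hc' hne
      exact hCdisj c ((hsCmem c).mp (by exact hc)) c' ((hsCmem c').mp (by exact hc')) hne
    case hm =>
      intro c hc
      exact hCmeas c ((hsCmem c).mp hc)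
  have hM0 : M ≠ 0 := by
    intro h
    rw [h] at hcount
    simp only [Nat.cast_zero, zero_mul] at hcount
    rw [hcount] at hμUpos
    exact lt_irrefl _ hμUpos
  have hMR : (0:ℝ) < (M:ℝ) := by
    have : 0 < M := Nat.pos_of_ne_zero hM0
    exact_mod_cast this
  -- the measure of T
  have hτval : μH T = ENNReal.ofReal ((1 - (ctx.q:ℝ)⁻¹) / M) := by
    have hME0 : (M : ℝ≥0∞) ≠ 0 := by
      simp only [ne_eq, Nat.cast_eq_zero]; exact hM0
    have hMET : (M : ℝ≥0∞) ≠ ⊤ := ENNReal.natCast_ne_top _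
    apply (ENNReal.mul_right_inj hME0 hMET).mp
    rw [← hcount, hμU]
    rw [← ENNReal.ofReal_natCast M, ← ENNReal.ofReal_mul (Nat.cast_nonneg _)]
    congr 1
    rw [mul_comm, div_mul_cancel₀ _ (ne_of_gt hMR)]
  -- the epsilon
  set ε : ℚ := ((ctx.q:ℚ) - 1) / ((ctx.q:ℚ) * M) with hεdef
  have hεpos : 0 < ε := by
    apply div_pos
    · have : (1:ℚ) < (ctx.q:ℚ) := by exact_mod_cast hq1
      linarith
    · have h1 : (0:ℚ) < (ctx.q:ℚ) := by positivity
      have h2 : (0:ℚ) < (M:ℚ) := by exact_mod_cast Nat.pos_of_ne_zero hM0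
      exact mul_pos h1 h2
  have hεreal : ((ε:ℝ)) = (1 - (ctx.q:ℝ)⁻¹) / M := by
    have hq0' : (ctx.q:ℝ) ≠ 0 := ne_of_gt hq0
    have hM0' : (M:ℝ) ≠ 0 := ne_of_gt hMR
    rw [hεdef]
    push_cast
    field_simp
  -- Part 1
  have part1 : ∀ k : ℤ, ¬ k ≡ ctx.v μ0 [ZMOD (n : ℤ)] →
      {t : K | t ∈ cosetPn K μ0 n ∧ ctx.v t = k} = ∅ := by
    intro k hk
    ext y
    simp only [Set.mem_setOf_eq, Set.mem_empty_iff_false, iff_false, not_and]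
    rintro ⟨-, ⟨z, hz0, rfl⟩, rfl⟩ hv
    apply hk
    have hy0 : μ0 * z ^ n ≠ 0 := mul_ne_zero hμ0 (pow_ne_zero _ hz0)
    have h1 : ‖μ0 * z ^ n‖ = (ctx.q:ℝ) ^ (-(ctx.v μ0 + n * ctx.v z)) := by
      rw [norm_mul, ctx.norm_eq μ0 hμ0, norm_pow, ctx.norm_eq z hz0]
      rw [← zpow_natCast ((ctx.q:ℝ) ^ (-(ctx.v z))) n, ← zpow_mul, ← zpow_add₀ (ne_of_gt hq0)]
      congr 1
      ring
    have h2 : ctx.v (μ0 * z ^ n) = ctx.v μ0 + n * ctx.v z :=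
      (vEq _ hy0 _).mpr h1
    rw [h2] at hv
    have : (n:ℤ) ∣ ctx.v μ0 - k := ⟨-ctx.v z, by rw [mul_neg]; linarith⟩
    exact (Int.modEq_iff_dvd).mpr this
  refine ⟨part1, ε, hεpos, ?_⟩
  intro k hk
  obtain ⟨j, hj⟩ : ∃ j : ℤ, ctx.v μ0 - k = n * j := (Int.modEq_iff_dvd.mp hk)
  have hw0 : π ^ (-j) ≠ 0 := zpow_ne_zero _ hπ0
  set cK : K := μ0 * (π ^ (-j)) ^ n with hcK
  have hc0 : cK ≠ 0 := mul_ne_zero hμ0 (pow_ne_zero _ hw0)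
  have hwnorm : ‖π ^ (-j)‖ = (ctx.q:ℝ) ^ j := by
    rw [norm_zpow, hπn, ← zpow_mul]; congr 1; ring
  have hcnorm : ‖cK‖ = (ctx.q:ℝ) ^ (-k) := by
    rw [hcK, norm_mul, norm_pow, hwnorm, ctx.norm_eq μ0 hμ0]
    rw [← zpow_natCast ((ctx.q:ℝ) ^ j) n, ← zpow_mul, ← zpow_add₀ (ne_of_gt hq0)]
    congr 1
    linear_combination -hj
  have hSk : {t : K | t ∈ cosetPn K μ0 n ∧ ctx.v t = k} = cK • T := by
    ext y
    simp only [Set.mem_setOf_eq]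
    constructor
    · rintro ⟨⟨-, ⟨z, hz0, rfl⟩, rfl⟩, hv⟩
      have hy0 : μ0 * z ^ n ≠ 0 := mul_ne_zero hμ0 (pow_ne_zero _ hz0)
      have hynorm : ‖μ0 * z ^ n‖ = (ctx.q:ℝ) ^ (-k) := (vEq _ hy0 _).mp hv
      have hceq : cK * (z / π ^ (-j)) ^ n = μ0 * z ^ n := by
        have hπjn0 : (π ^ (j:ℤ)) ^ n ≠ 0 := pow_ne_zero _ (zpow_ne_zero _ hπ0)
        have hwn0 : (π ^ (-j:ℤ)) ^ n ≠ 0 := pow_ne_zero _ (zpow_ne_zero _ hπ0)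
        rw [hcK, div_pow]
        field_simp
      refine Set.mem_smul_set.mpr ⟨(z / π ^ (-j)) ^ n,
        ⟨⟨z / π ^ (-j), div_ne_zero hz0 hw0, rfl⟩, ?_⟩, by rw [smul_eq_mul]; exact hceq⟩
      have h3 : ‖cK‖ * ‖(z / π ^ (-j)) ^ n‖ = ‖cK‖ * 1 := by
        rw [← norm_mul, hceq, hynorm, mul_one, hcnorm]
      have h4 : ‖cK‖ ≠ 0 := by rw [hcnorm]; positivity
      exact mul_left_cancel₀ h4 h3
    · rintro ⟨b, ⟨⟨z, hz0, rfl⟩, hb1⟩, rfl⟩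
      have hzn0 : z ^ n ≠ 0 := pow_ne_zero _ hz0
      constructor
      · refine ⟨(π ^ (-j) * z) ^ n, ⟨π ^ (-j) * z, mul_ne_zero hw0 hz0, rfl⟩, ?_⟩
        show cK • z ^ n = μ0 * (π ^ (-j) * z) ^ n
        rw [smul_eq_mul, hcK, mul_pow]
        ring
      · have hcz0 : cK * z ^ n ≠ 0 := mul_ne_zero hc0 hzn0
        show ctx.v (cK • z ^ n) = k
        rw [smul_eq_mul]
        apply (vEq _ hcz0 _).mpr
        rw [norm_mul, hb1, mul_one, hcnorm]
  rw [hSk, scale cK hc0 T hTmeas, hcnorm, hτval]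
  rw [← ENNReal.ofReal_mul (by positivity)]
  congr 1
  rw [hεreal]
  ring


end PadicCell
end

section
/- For subanalytic functions α, β : K^m → K^× and integers n > 0 and a₁, a₂, the characteristic function of the set {λ ∈ K^m : v(α(λ)) ≡ a₁ mod n and v(β(λ)) ≡ a₂ mod n} is a simple q-exponential function, i.e. it belongs to Ω_an. -/
open MeasureTheory
open scoped Classical
open FirstOrder

namespace PadicCell

variable (K : Type) [NormedField K]

variable (K₁ : Type) [Field K₁] [(LK K).Structure K₁]

/-! ### Auxiliary development -/

section Aux

variable {K : Type} [NormedField K]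

namespace PadicData

variable (ctx : PadicData K)

lemma one_lt_q_real : (1:ℝ) < (ctx.q : ℝ) := by exact_mod_cast ctx.one_lt_q

lemma q_pos_real : (0:ℝ) < (ctx.q : ℝ) := lt_trans one_pos ctx.one_lt_q_real

lemma zpow_inj : Function.Injective (fun k : ℤ => (ctx.q:ℝ) ^ k) :=
  zpow_right_injective₀ ctx.q_pos_real (ne_of_gt ctx.one_lt_q_real)

lemma v_eq_of_norm {x : K} (hx : x ≠ 0) {k : ℤ} (h : ‖x‖ = (ctx.q:ℝ) ^ (-k)) :
    ctx.v x = k := by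
  have h2 := ctx.norm_eq x hx
  rw [h2] at h
  have := ctx.zpow_inj h
  omega

lemma v_one : ctx.v (1 : K) = 0 := by
  apply ctx.v_eq_of_norm one_ne_zero
  simp

lemma v_mul {x y : K} (hx : x ≠ 0) (hy : y ≠ 0) :
    ctx.v (x * y) = ctx.v x + ctx.v y := by
  apply ctx.v_eq_of_norm (mul_ne_zero hx hy)
  rw [norm_mul, ctx.norm_eq x hx, ctx.norm_eq y hy, ← zpow_add₀ (ne_of_gt ctx.q_pos_real)]
  ring_nf

lemma v_inv {x : K} (hx : x ≠ 0) : ctx.v x⁻¹ = -ctx.v x := by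
  apply ctx.v_eq_of_norm (inv_ne_zero hx)
  rw [norm_inv, ctx.norm_eq x hx, ← zpow_neg, neg_neg]

lemma v_pow {x : K} (hx : x ≠ 0) (k : ℕ) : ctx.v (x ^ k) = k * ctx.v x := by
  induction k with
  | zero => simpa using ctx.v_one
  | succ k ih =>
      rw [pow_succ, ctx.v_mul (pow_ne_zero _ hx) hx, ih]
      push_cast; ring

lemma v_zpow {x : K} (hx : x ≠ 0) (k : ℤ) : ctx.v (x ^ k) = k * ctx.v x := by
  rcases le_or_gt 0 k with h | h
  · lift k to ℕ using h
    rw [zpow_natCast, ctx.v_pow hx]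
  · have hk : k = -(-k) := by ring
    rw [hk, zpow_neg, ctx.v_inv (zpow_ne_zero _ hx)]
    lift -k to ℕ using (by omega) with k' hk'
    rw [zpow_natCast, ctx.v_pow hx, hk']
    ring

lemma v_nonneg_of_norm_le_one {x : K} (hx : x ≠ 0) (h : ‖x‖ ≤ 1) : 0 ≤ ctx.v x := by
  have h2 := ctx.norm_eq x hx
  rw [h2] at h
  have : (ctx.q:ℝ) ^ (-ctx.v x) ≤ (ctx.q:ℝ) ^ (0:ℤ) := by simpa using h
  rw [zpow_le_zpow_iff_right₀ ctx.one_lt_q_real] at this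
  omega

lemma norm_le_inv_q_of_lt_one {x : K} (h : ‖x‖ < 1) : ‖x‖ ≤ ((ctx.q:ℝ))⁻¹ := by
  rcases eq_or_ne x 0 with rfl | hx
  · simp
  · rw [ctx.norm_eq x hx] at h ⊢
    have : (ctx.q:ℝ) ^ (-ctx.v x) < (ctx.q:ℝ) ^ (0:ℤ) := by simpa using h
    rw [zpow_lt_zpow_iff_right₀ ctx.one_lt_q_real] at this
    calc (ctx.q:ℝ) ^ (-ctx.v x) ≤ (ctx.q:ℝ) ^ (-1:ℤ) := by
          rw [zpow_le_zpow_iff_right₀ ctx.one_lt_q_real]; omega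
      _ = ((ctx.q:ℝ))⁻¹ := by simp

end PadicData

end Aux
section Aux2

variable {p : ℕ} [Fact p.Prime] {K : Type} [NormedField K] [Algebra ℚ_[p] K]

lemma aux_norm_natCast_le_one (hcont : Continuous (algebraMap ℚ_[p] K)) (k : ℕ) :
    ‖(k : K)‖ ≤ 1 := by
  obtain ⟨C, hC⟩ : ∃ C, ∀ x : ℚ_[p], ‖x‖ ≤ 1 → ‖algebraMap ℚ_[p] K x‖ ≤ C := by
    have hcomp : IsCompact (Metric.closedBall (0:ℚ_[p]) 1) := isCompact_closedBall _ _
    have him : IsCompact ((algebraMap ℚ_[p] K) '' Metric.closedBall 0 1) :=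
      hcomp.image hcont
    obtain ⟨C, hC⟩ := him.isBounded.exists_norm_le
    exact ⟨C, fun x hx => hC _ ⟨x, by simpa [Metric.mem_closedBall, dist_zero_right] using hx, rfl⟩⟩
  by_contra hgt
  push_neg at hgt
  obtain ⟨j, hj⟩ := pow_unbounded_of_one_lt (y := ‖(k:K)‖) C hgt
  have hle : ‖(k : K)‖ ^ j ≤ C := by
    have h1 : ‖((k : ℚ_[p]) ^ j : ℚ_[p])‖ ≤ 1 := by
      calc ‖((k:ℚ_[p]))^j‖ = ‖((k:ℤ):ℚ_[p])‖^j := by norm_num [norm_pow]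
        _ ≤ 1 := pow_le_one₀ (norm_nonneg _) (Padic.norm_int_le_one _)
    have := hC _ h1
    rw [map_pow, map_natCast] at this
    rwa [norm_pow] at this
  exact absurd hle (not_le.mpr hj)

lemma aux_ultra (hcont : Continuous (algebraMap ℚ_[p] K)) : IsUltrametricDist K :=
  IsUltrametricDist.isUltrametricDist_of_forall_norm_natCast_le_one (aux_norm_natCast_le_one hcont)

lemma aux_complete [FiniteDimensional ℚ_[p] K]
    (hcont : Continuous (algebraMap ℚ_[p] K)) : CompleteSpace K := by
  haveI : ContinuousSMul ℚ_[p] K := ⟨by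
    simp only [Algebra.smul_def]
    exact (hcont.comp continuous_fst).mul continuous_snd⟩
  exact FiniteDimensional.complete ℚ_[p] K

end Aux2

lemma aux_charZero (p : ℕ) [Fact p.Prime] (K : Type) [NormedField K] [Algebra ℚ_[p] K] :
    CharZero K :=
  charZero_of_injective_algebraMap (algebraMap ℚ_[p] K).injective
section Aux3

variable {K : Type} [NormedField K]

/-- Binomial remainder: `(1+y)^n = 1 + n y + y² s` with `‖s‖ ≤ 1`. -/
lemma aux_pow_one_add (hu : ∀ x y : K, ‖x + y‖ ≤ max ‖x‖ ‖y‖)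
    (hnat : ∀ k : ℕ, ‖(k:K)‖ ≤ 1) :
    ∀ (n : ℕ) (y : K), ‖y‖ ≤ 1 →
      ∃ s : K, (1+y)^n = 1 + n*y + y^2*s ∧ ‖s‖ ≤ 1 := by
  intro n
  induction n with
  | zero =>
      intro y _
      exact ⟨0, by push_cast; ring, by simp⟩
  | succ n ih =>
      intro y hy
      obtain ⟨s, hs, hsn⟩ := ih y hy
      refine ⟨(n:K) + s + y*s, ?_, ?_⟩
      · rw [pow_succ, hs]; push_cast; ring
      · calc ‖(n:K) + s + y*s‖ ≤ max (max ‖(n:K)‖ ‖s‖) ‖y*s‖ :=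
              le_trans (hu _ _) (max_le_max (hu _ _) le_rfl)
          _ ≤ 1 := by
              apply max_le (max_le (hnat n) hsn)
              rw [norm_mul]
              exact mul_le_one₀ hy (norm_nonneg _) hsn

/-- Difference of two binomials: `(1+y)^n - (1+y')^n = n (y-y') + c` with
`‖c‖ ≤ max ‖y‖ ‖y'‖ * ‖y - y'‖`. -/
lemma aux_pow_sub_pow (hu : ∀ x y : K, ‖x + y‖ ≤ max ‖x‖ ‖y‖)
    (hnat : ∀ k : ℕ, ‖(k:K)‖ ≤ 1) :
    ∀ (n : ℕ) (y y' : K), ‖y‖ ≤ 1 → ‖y'‖ ≤ 1 →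
      ∃ c : K, (1+y)^n - (1+y')^n = n*(y - y') + c ∧
        ‖c‖ ≤ max ‖y‖ ‖y'‖ * ‖y - y'‖ := by
  intro n
  induction n with
  | zero =>
      intro y y' _ _
      refine ⟨0, by push_cast; ring, by simp; positivity⟩
  | succ n ih =>
      intro y y' hy hy'
      obtain ⟨c, hc, hcn⟩ := ih y y' hy hy'
      obtain ⟨s, hs, hsn⟩ := aux_pow_one_add hu hnat n y hy
      set M := max ‖y‖ ‖y'‖ with hM
      have hM1 : M ≤ 1 := max_le hy hy'
      have hyM : ‖y‖ ≤ M := le_max_left _ _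
      have hy'M : ‖y'‖ ≤ M := le_max_right _ _
      refine ⟨c + ((n:K)*y + y^2*s)*(y-y') + (n:K)*(y-y')*y' + c*y', ?_, ?_⟩
      · have hB : (1+y')^n = (1+y)^n - ((n:K)*(y-y') + c) := by
          rw [← hc]; ring
        rw [pow_succ, pow_succ, hB, hs]
        push_cast; ring
      · have hA : ‖(n:K)*y + y^2*s‖ ≤ M := by
          refine le_trans (hu _ _) (max_le ?_ ?_)
          · rw [norm_mul]
            calc ‖(n:K)‖ * ‖y‖ ≤ 1 * ‖y‖ := mul_le_mul_of_nonneg_right (hnat n) (norm_nonneg _)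
              _ = ‖y‖ := one_mul _
              _ ≤ M := hyM
          · rw [norm_mul, norm_pow, pow_two]
            calc ‖y‖ * ‖y‖ * ‖s‖ ≤ 1 * ‖y‖ * 1 :=
                  mul_le_mul (mul_le_mul hy le_rfl (norm_nonneg _) zero_le_one)
                    hsn (norm_nonneg _) (by positivity)
              _ = ‖y‖ := by ring
              _ ≤ M := hyM
        have hd : ∀ a b : K, ‖a‖ ≤ M * ‖y - y'‖ → ‖b‖ ≤ M * ‖y - y'‖ →
            ‖a + b‖ ≤ M * ‖y - y'‖ := fun a b ha hb =>
          le_trans (hu a b) (max_le ha hb)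
        refine hd _ _ (hd _ _ (hd _ _ hcn ?_) ?_) ?_
        · rw [norm_mul]
          exact mul_le_mul hA le_rfl (norm_nonneg _) (le_trans (norm_nonneg _) hyM)
        · rw [norm_mul, norm_mul]
          calc ‖(n:K)‖ * ‖y - y'‖ * ‖y'‖ ≤ 1 * ‖y - y'‖ * M := by
                apply mul_le_mul _ hy'M (norm_nonneg _) (by positivity)
                exact mul_le_mul (hnat n) le_rfl (norm_nonneg _) zero_le_one
            _ = M * ‖y - y'‖ := by ring
        · rw [norm_mul]
          calc ‖c‖ * ‖y'‖ ≤ M * ‖y - y'‖ * 1 :=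
                mul_le_mul hcn (le_trans hy' le_rfl) (norm_nonneg _) (by positivity)
            _ = M * ‖y - y'‖ := by ring

end Aux3
section Aux4

variable {K : Type} [NormedField K]

/-- Newton/Hensel: elements close enough to `1` are `n`-th powers. -/
lemma aux_exists_nth_root (ctx : PadicData K)
    (hu : ∀ x y : K, ‖x + y‖ ≤ max ‖x‖ ‖y‖)
    (hnat : ∀ k : ℕ, ‖(k:K)‖ ≤ 1) (hcompl : CompleteSpace K)
    {n : ℕ} (hchar : (n:K) ≠ 0) :
    ∃ N : ℕ, ∀ t : K, ‖t‖ ≤ (ctx.q:ℝ) ^ (-(N:ℤ)) →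
      ∃ z : K, z ≠ 0 ∧ 1 + t = z ^ n := by
  haveI := hcompl
  set e := ctx.v (n:K) with he_def
  have he : 0 ≤ e := ctx.v_nonneg_of_norm_le_one hchar (hnat n)
  set ε := ‖(n:K)‖ with hε_def
  have hε : ε = (ctx.q:ℝ) ^ (-e) := ctx.norm_eq _ hchar
  have hεpos : 0 < ε := norm_pos_iff.mpr hchar
  have hq0 : (0:ℝ) < (ctx.q:ℝ) := ctx.q_pos_real
  have hq1 : (1:ℝ) < (ctx.q:ℝ) := ctx.one_lt_q_real
  refine ⟨(2*e+1).toNat, fun t ht => ?_⟩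
  have hNcast : (((2*e+1).toNat : ℕ) : ℤ) = 2*e+1 := Int.toNat_of_nonneg (by omega)
  rw [hNcast] at ht
  set r : ℝ := (ctx.q:ℝ) ^ (-(e+1)) with hr_def
  have hrpos : 0 < r := zpow_pos hq0 _
  have hr1 : r < 1 := by
    have h := (zpow_lt_zpow_iff_right₀ hq1 (m := -(e+1)) (n := 0)).mpr (by omega)
    rwa [zpow_zero] at h
  have hrε : r * ε = (ctx.q:ℝ) ^ (-(2*e+1)) := by
    rw [hr_def, hε, ← zpow_add₀ (ne_of_gt hq0)]
    ring_nf
  have hrq : r = ε * ((ctx.q:ℝ))⁻¹ := by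
    rw [hr_def, hε, ← zpow_neg_one, ← zpow_add₀ (ne_of_gt hq0)]
    ring_nf
  have ht' : ‖t‖ ≤ r * ε := by rwa [hrε]
  set Φ : K → K := fun y => (t - ((1+y)^n - 1 - n*y))/(n:K) with hΦ_def
  set s : Set K := Metric.closedBall (0:K) r with hs_def
  have hsf : Set.MapsTo Φ s s := by
    intro y hy
    rw [hs_def, mem_closedBall_zero_iff] at hy ⊢
    have hy1 : ‖y‖ ≤ 1 := hy.trans hr1.le
    obtain ⟨s₀, hs₀, hs₀n⟩ := aux_pow_one_add hu hnat n y hy1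
    have hnum : t - ((1+y)^n - 1 - n*y) = t - y^2*s₀ := by rw [hs₀]; ring
    rw [hΦ_def]
    simp only []
    rw [hnum, norm_div, div_le_iff₀ hεpos]
    have h1 : ‖t - y^2*s₀‖ ≤ max ‖t‖ ‖y^2*s₀‖ := by
      rw [sub_eq_add_neg]
      exact le_trans (hu _ _) (by rw [norm_neg])
    refine le_trans h1 (max_le ht' ?_)
    rw [norm_mul, norm_pow]
    calc ‖y‖^2 * ‖s₀‖ ≤ r^2 * 1 :=
          mul_le_mul (pow_le_pow_left₀ (norm_nonneg _) hy 2) hs₀n (norm_nonneg _)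
            (by positivity)
      _ = r * r := by ring
      _ ≤ r * ε := by
          apply mul_le_mul_of_nonneg_left _ hrpos.le
          rw [hrq]
          calc ε * ((ctx.q:ℝ))⁻¹ ≤ ε * 1 := by
                apply mul_le_mul_of_nonneg_left _ hεpos.le
                rw [inv_le_one_iff₀]; right; exact hq1.le
            _ = ε := mul_one _
  have hsc : IsComplete s := Metric.isClosed_closedBall.isComplete
  set κ : NNReal := ((ctx.q:NNReal))⁻¹ with hκ_def
  have hκcoe : (κ : ℝ) = ((ctx.q:ℝ))⁻¹ := by
    rw [hκ_def]; push_cast; ring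
  have hcontr : ContractingWith κ (hsf.restrict Φ s s) := by
    constructor
    · rw [← NNReal.coe_lt_coe, hκcoe, NNReal.coe_one]
      rw [inv_lt_one_iff₀]; right; exact hq1
    · apply LipschitzWith.of_dist_le_mul
      rintro ⟨y, hy⟩ ⟨y', hy'⟩
      simp only [Set.MapsTo.val_restrict_apply, Subtype.dist_eq]
      rw [hs_def, mem_closedBall_zero_iff] at hy hy'
      have hy1 : ‖y‖ ≤ 1 := hy.trans hr1.le
      have hy'1 : ‖y'‖ ≤ 1 := hy'.trans hr1.le
      obtain ⟨c, hc, hcn⟩ := aux_pow_sub_pow hu hnat n y y' hy1 hy'1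
      have hdiff : Φ y - Φ y' = -c / (n:K) := by
        rw [hΦ_def]
        simp only []
        rw [div_sub_div_same]
        congr 1
        linear_combination -hc
      rw [dist_eq_norm, dist_eq_norm, hdiff, norm_div, norm_neg, hκcoe]
      rw [div_le_iff₀ hεpos]
      calc ‖c‖ ≤ max ‖y‖ ‖y'‖ * ‖y - y'‖ := hcn
        _ ≤ r * ‖y - y'‖ :=
            mul_le_mul_of_nonneg_right (max_le hy hy') (norm_nonneg _)
        _ = (ctx.q:ℝ)⁻¹ * ‖y - y'‖ * ε := by rw [hrq]; ring
  have h0s : (0:K) ∈ s := by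
    rw [hs_def, mem_closedBall_zero_iff]; simp [hrpos.le]
  obtain ⟨y, hys, hfix, -, -⟩ :=
    hcontr.exists_fixedPoint' hsc hsf h0s (edist_ne_top _ _)
  have hfix' : Φ y = y := hfix
  have heq : (1+y)^n = 1 + t := by
    have h2 : t - ((1+y)^n - 1 - n*y) = y * (n:K) := by
      rw [hΦ_def] at hfix'
      simp only [] at hfix'
      field_simp at hfix'
      linear_combination hfix'
    linear_combination -h2
  refine ⟨1 + y, ?_, by rw [heq]⟩
  intro hz
  have hym : y = -1 := by linear_combination hz
  rw [hs_def, mem_closedBall_zero_iff, hym] at hys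
  simp at hys
  linarith

end Aux4
section Aux5

variable {K : Type} [NormedField K]

/-- Finitely many representatives of the unit ball modulo `π^N R`. -/
lemma aux_exists_reps (ctx : PadicData K) (hu : ∀ x y : K, ‖x + y‖ ≤ max ‖x‖ ‖y‖)
    {π : K} (hπ0 : π ≠ 0) (hπ : ctx.v π = 1) (N : ℕ) :
    ∃ S : Finset K, ∀ x : K, ‖x‖ ≤ 1 → ∃ c ∈ S, ‖x - c‖ ≤ (ctx.q:ℝ) ^ (-(N:ℤ)) := by
  have hq0 : (0:ℝ) < (ctx.q:ℝ) := ctx.q_pos_real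
  have hπn : ‖π‖ = ((ctx.q:ℝ))⁻¹ := by
    rw [ctx.norm_eq π hπ0, hπ]; simp
  induction N with
  | zero =>
      exact ⟨{0}, fun x hx => ⟨0, Finset.mem_singleton_self 0, by simpa using hx⟩⟩
  | succ N ih =>
      obtain ⟨S, hS⟩ := ih
      obtain ⟨cres, hcle, hcres⟩ := ctx.residue_card
      refine ⟨Finset.image (fun pc : K × Fin ctx.q => pc.1 + π^N * cres pc.2)
        (S ×ˢ Finset.univ), fun x hx => ?_⟩
      obtain ⟨c, hcS, hc⟩ := hS x hx
      set w := (x - c)/π^N with hw_def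
      have hπN : ‖π^N‖ = (ctx.q:ℝ) ^ (-(N:ℤ)) := by
        rw [norm_pow, hπn, ← zpow_neg_one, ← zpow_natCast ((ctx.q:ℝ)^(-1:ℤ)), ← zpow_mul]
        ring_nf
      have hπNne : (0:ℝ) < ‖π^N‖ := norm_pos_iff.mpr (pow_ne_zero _ hπ0)
      have hwle : ‖w‖ ≤ 1 := by
        rw [hw_def, norm_div, div_le_one hπNne, hπN]
        exact hc
      obtain ⟨i, hi, -⟩ := hcres w hwle
      refine ⟨c + π^N * cres i, Finset.mem_image.mpr
        ⟨(c, i), Finset.mem_product.mpr ⟨hcS, Finset.mem_univ _⟩, rfl⟩, ?_⟩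
      have hxc : x - (c + π^N * cres i) = π^N * (w - cres i) := by
        rw [hw_def]
        field_simp
        ring
      rw [hxc, norm_mul, hπN]
      have hwc : ‖w - cres i‖ ≤ ((ctx.q:ℝ))⁻¹ := ctx.norm_le_inv_q_of_lt_one hi
      calc (ctx.q:ℝ)^(-(N:ℤ)) * ‖w - cres i‖ ≤ (ctx.q:ℝ)^(-(N:ℤ)) * ((ctx.q:ℝ))⁻¹ :=
            mul_le_mul_of_nonneg_left hwc (by positivity)
        _ = (ctx.q:ℝ)^(-(((N+1:ℕ)):ℤ)) := by
            rw [← zpow_neg_one, ← zpow_add₀ (ne_of_gt hq0)]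
            congr 1
            push_cast
            ring

/-- Finitely many cosets of `P_n` cover `K^×`. -/
lemma aux_exists_cosets (ctx : PadicData K)
    (hu : ∀ x y : K, ‖x + y‖ ≤ max ‖x‖ ‖y‖)
    (hnat : ∀ k : ℕ, ‖(k:K)‖ ≤ 1) (hcompl : CompleteSpace K)
    {n : ℕ} (hn : 0 < n) (hchar : (n:K) ≠ 0) :
    ∃ C : Finset K, (∀ c ∈ C, c ≠ 0) ∧
      ∀ x : K, x ≠ 0 → ∃ c ∈ C, x ∈ cosetPn K c n := by
  obtain ⟨π, hπ0, hπ⟩ := ctx.exists_uniformizer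
  obtain ⟨N₀, hN⟩ := aux_exists_nth_root ctx hu hnat hcompl hchar
  set N := N₀ + 1 with hN_def
  have hmono : (ctx.q:ℝ) ^ (-(N:ℤ)) ≤ (ctx.q:ℝ) ^ (-(N₀:ℤ)) := by
    rw [zpow_le_zpow_iff_right₀ ctx.one_lt_q_real]
    omega
  obtain ⟨S, hS⟩ := aux_exists_reps ctx hu hπ0 hπ N
  have hq0 : (0:ℝ) < (ctx.q:ℝ) := ctx.q_pos_real
  have hq1 : (1:ℝ) < (ctx.q:ℝ) := ctx.one_lt_q_real
  have hqN1 : (ctx.q:ℝ)^(-(N:ℤ)) < 1 := by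
    have h := (zpow_lt_zpow_iff_right₀ hq1 (m := -(N:ℤ)) (n := 0)).mpr (by omega)
    rwa [zpow_zero] at h
  classical
  refine ⟨((Finset.range n ×ˢ S).image (fun rc : ℕ × K => π ^ rc.1 * rc.2)).filter
    (fun c => c ≠ 0), fun c hc => (Finset.mem_filter.mp hc).2, fun x hx => ?_⟩
  -- decompose x = π^(v x) * u with u a unit
  set u := x * π ^ (-(ctx.v x)) with hu_def
  have hu0 : u ≠ 0 := mul_ne_zero hx (zpow_ne_zero _ hπ0)
  have hun : ‖u‖ = 1 := by
    rw [ctx.norm_eq u hu0, hu_def, ctx.v_mul hx (zpow_ne_zero _ hπ0),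
      ctx.v_zpow hπ0, hπ]
    norm_num
  -- find the coset representative for the unit u
  obtain ⟨c, hcS, hc⟩ := hS u hun.le
  have hc0 : c ≠ 0 := by
    rintro rfl
    rw [sub_zero, hun] at hc
    linarith
  have hcnorm : ‖c‖ = 1 := by
    have h1 : ‖c‖ ≤ 1 := by
      have h0 : c = u - (u - c) := by ring
      rw [h0, sub_eq_add_neg]
      refine le_trans (hu _ _) (max_le hun.le ?_)
      rw [norm_neg]
      exact hc.trans hqN1.le
    rcases lt_or_eq_of_le h1 with h2 | h2
    · exfalso
      have h3 : ‖u‖ ≤ max ‖c‖ ‖u - c‖ := by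
        calc ‖u‖ = ‖c + (u - c)‖ := by congr 1; ring
          _ ≤ _ := hu _ _
      rw [hun] at h3
      have h4 : max ‖c‖ ‖u - c‖ < 1 := max_lt h2 (lt_of_le_of_lt hc hqN1)
      linarith
    · exact h2
  -- u = c * zⁿ via the Newton lemma
  set t := (u - c)/c with ht_def
  have htn : ‖t‖ ≤ (ctx.q:ℝ) ^ (-(N₀:ℤ)) := by
    rw [ht_def, norm_div, hcnorm, div_one]
    exact hc.trans hmono
  obtain ⟨z, hz0, hz⟩ := hN t htn
  have hucz : u = c * z ^ n := by
    rw [← hz, ht_def]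
    field_simp
    ring
  -- split the valuation
  set vx := ctx.v x with hvx
  set kk := vx / (n:ℤ) with hkk
  set r := vx % (n:ℤ) with hr
  have hn' : (0:ℤ) < (n:ℤ) := by exact_mod_cast hn
  have hr0 : 0 ≤ r := Int.emod_nonneg _ (ne_of_gt hn')
  have hrn : r < (n:ℤ) := Int.emod_lt_of_pos _ hn'
  have hsum : (n:ℤ) * kk + r = vx := Int.mul_ediv_add_emod _ _
  have hπr : (π ^ r.toNat : K) = π ^ r := by
    rw [← zpow_natCast, Int.toNat_of_nonneg hr0]
  have hxdec : π ^ vx * u = x := by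
    rw [hu_def, zpow_neg]
    field_simp
  have key : (π ^ r.toNat * c) * (π ^ kk * z) ^ n = x := by
    rw [hπr, ← hxdec, hucz]
    rw [mul_pow, ← zpow_natCast (π ^ kk) n, ← zpow_mul]
    rw [show vx = r + kk * (n:ℤ) by linarith [hsum], zpow_add₀ hπ0]
    ring
  refine ⟨π ^ r.toNat * c, ?_, ?_⟩
  · rw [Finset.mem_filter]
    refine ⟨Finset.mem_image.mpr ⟨(r.toNat, c), Finset.mem_product.mpr
      ⟨Finset.mem_range.mpr (by omega), hcS⟩, rfl⟩, ?_⟩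
    exact mul_ne_zero (pow_ne_zero _ hπ0) hc0
  · exact ⟨(π ^ kk * z) ^ n, ⟨π ^ kk * z,
      mul_ne_zero (zpow_ne_zero _ hπ0) hz0, rfl⟩, key.symm⟩

/-- Valuations are constant mod `n` on cosets of `P_n`. -/
lemma aux_v_cosetPn (ctx : PadicData K) {c x : K} (hc : c ≠ 0) {n : ℕ}
    (hx : x ∈ cosetPn K c n) : x ≠ 0 ∧ ctx.v x ≡ ctx.v c [ZMOD (n:ℤ)] := by
  obtain ⟨w, ⟨z, hz0, rfl⟩, rfl⟩ := hx
  refine ⟨mul_ne_zero hc (pow_ne_zero _ hz0), ?_⟩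
  rw [ctx.v_mul hc (pow_ne_zero _ hz0), ctx.v_pow hz0]
  exact Int.ModEq.symm (Int.modEq_iff_dvd.mpr ⟨ctx.v z, by ring⟩)

lemma aux_neg_modEq {a b n : ℤ} : (-a ≡ -b [ZMOD n]) ↔ (a ≡ b [ZMOD n]) := by
  rw [Int.modEq_iff_dvd, Int.modEq_iff_dvd, show -b - -a = -(b - a) by ring, dvd_neg]

/-- Finsets of coset representatives for a congruence class of the valuation and
for its complement. -/
lemma aux_exists_coset_finsets (ctx : PadicData K)
    (hu : ∀ x y : K, ‖x + y‖ ≤ max ‖x‖ ‖y‖)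
    (hnat : ∀ k : ℕ, ‖(k:K)‖ ≤ 1) (hcompl : CompleteSpace K)
    {n : ℕ} (hn : 0 < n) (hchar : (n:K) ≠ 0) (b : ℤ) :
    ∃ C₁ C₂ : Finset K, (∀ c ∈ C₁, c ≠ 0) ∧ (∀ c ∈ C₂, c ≠ 0) ∧
      (∀ x : K, x ≠ 0 → ((ctx.v x ≡ b [ZMOD (n:ℤ)]) ↔ ∃ c ∈ C₁, x ∈ cosetPn K c n)) ∧
      (∀ x : K, x ≠ 0 → ((¬ ctx.v x ≡ b [ZMOD (n:ℤ)]) ↔ ∃ c ∈ C₂, x ∈ cosetPn K c n)) := by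
  classical
  obtain ⟨C, hC0, hC⟩ := aux_exists_cosets ctx hu hnat hcompl hn hchar
  refine ⟨C.filter (fun c => ctx.v c ≡ b [ZMOD (n:ℤ)]),
    C.filter (fun c => ¬ ctx.v c ≡ b [ZMOD (n:ℤ)]),
    fun c hc => hC0 c (Finset.mem_filter.mp hc).1,
    fun c hc => hC0 c (Finset.mem_filter.mp hc).1, fun x hx => ?_, fun x hx => ?_⟩
  · constructor
    · intro hvb
      obtain ⟨c, hcC, hxc⟩ := hC x hx
      have h2 := (aux_v_cosetPn ctx (hC0 c hcC) hxc).2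
      exact ⟨c, Finset.mem_filter.mpr ⟨hcC, h2.symm.trans hvb⟩, hxc⟩
    · rintro ⟨c, hcC, hxc⟩
      obtain ⟨hcC', hcb⟩ := Finset.mem_filter.mp hcC
      exact ((aux_v_cosetPn ctx (hC0 c hcC') hxc).2).trans hcb
  · constructor
    · intro hvb
      obtain ⟨c, hcC, hxc⟩ := hC x hx
      have h2 := (aux_v_cosetPn ctx (hC0 c hcC) hxc).2
      refine ⟨c, Finset.mem_filter.mpr ⟨hcC, fun hcb => hvb (h2.trans hcb)⟩, hxc⟩
    · rintro ⟨c, hcC, hxc⟩ hvb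
      obtain ⟨hcC', hcb⟩ := Finset.mem_filter.mp hcC
      have h2 := (aux_v_cosetPn ctx (hC0 c hcC') hxc).2
      exact hcb (h2.symm.trans hvb)

end Aux5
section Aux6

variable {K : Type} [NormedField K]

lemma aux_mem_pn_one {y : K} : y ∈ Pn K 1 ↔ y ≠ 0 :=
  ⟨fun ⟨z, hz, hy⟩ => by simpa [hy] using hz, fun hy => ⟨y, hy, (pow_one y).symm⟩⟩

lemma aux_mem_cosetPn_iff {c : K} (hc : c ≠ 0) {n : ℕ} {y : K} :
    c⁻¹ * y ∈ Pn K n ↔ y ∈ cosetPn K c n := by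
  constructor
  · intro h
    exact ⟨c⁻¹ * y, h, by field_simp⟩
  · rintro ⟨z, hz, rfl⟩
    rwa [inv_mul_cancel_left₀ hc]

lemma aux_isBasic_coord {m : ℕ} (i : Fin m) :
    IsBasicSubanalytic K (fun x => x i) := by
  have h := IsBasicSubanalytic.ratfunc (K := K) (MvPolynomial.X i) (1 : MvPolynomial (Fin m) K)
  have he : (fun x : Fin m → K =>
      if MvPolynomial.eval x (1 : MvPolynomial (Fin m) K) = 0 then 0
      else MvPolynomial.eval x (MvPolynomial.X i) / MvPolynomial.eval x 1) = fun x => x i := by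
    funext x
    simp
  rwa [he] at h

lemma aux_isBasic_invCoord {m : ℕ} (i : Fin m) :
    IsBasicSubanalytic K (fun x => if x i = 0 then 0 else (x i)⁻¹) := by
  have h := IsBasicSubanalytic.ratfunc (K := K) (1 : MvPolynomial (Fin 1) K)
    (MvPolynomial.X 0)
  have h2 := IsBasicSubanalytic.comp h (g := fun _ : Fin 1 => fun x : Fin m → K => x i)
    (fun _ => aux_isBasic_coord i)
  have he : (fun x : Fin m → K =>
      if MvPolynomial.eval (fun _ : Fin 1 => x i) (MvPolynomial.X (0 : Fin 1)) = 0 then 0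
      else MvPolynomial.eval (fun _ : Fin 1 => x i) (1 : MvPolynomial (Fin 1) K) /
        MvPolynomial.eval (fun _ : Fin 1 => x i) (MvPolynomial.X (0 : Fin 1)))
      = fun x : Fin m → K => if x i = 0 then 0 else (x i)⁻¹ := by
    funext x
    simp [one_div]
  rwa [he] at h2

lemma aux_isSubanalytic_empty (m : ℕ) : IsSubanalytic K (∅ : Set (Fin m → K)) :=
  ⟨0, fun _ => ∅, by simp, fun i => i.elim0⟩

lemma aux_isSubanalytic_union {m : ℕ} {X Y : Set (Fin m → K)}
    (hX : IsSubanalytic K X) (hY : IsSubanalytic K Y) : IsSubanalytic K (X ∪ Y) := by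
  obtain ⟨N₁, p₁, hX1, hX2⟩ := hX
  obtain ⟨N₂, p₂, hY1, hY2⟩ := hY
  refine ⟨N₁ + N₂, fun i => Fin.addCases p₁ p₂ i, ?_, ?_⟩
  · rw [hX1, hY1]
    have hs : (⋃ i : Fin N₁ ⊕ Fin N₂, Fin.addCases p₁ p₂ (finSumFinEquiv i)) =
        ⋃ i, Fin.addCases p₁ p₂ i :=
      finSumFinEquiv.surjective.iUnion_comp _
    rw [← hs, Set.iUnion_sum]
    congr 1
    · exact Set.iUnion_congr fun i => by simp
    · exact Set.iUnion_congr fun i => by simp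
  · intro i
    induction i using Fin.addCases with
    | left i => simpa using hX2 i
    | right i => simpa using hY2 i

lemma aux_isSubanalytic_preimage {m m' : ℕ} {X : Set (Fin m' → K)}
    (hX : IsSubanalytic K X) (T : (Fin m → K) → (Fin m' → K))
    (hT : ∀ i, IsBasicSubanalytic K (fun x => T x i)) :
    IsSubanalytic K (T ⁻¹' X) := by
  obtain ⟨N, piece, hX1, hX2⟩ := hX
  refine ⟨N, fun i => T ⁻¹' piece i, by rw [hX1, Set.preimage_iUnion], fun i => ?_⟩
  obtain ⟨f, hf, k, g, nn, hgn, hpe⟩ := hX2 i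
  refine ⟨fun x => f (T x), IsBasicSubanalytic.comp hf hT, k, fun j x => g j (T x), nn,
    fun j => ⟨IsBasicSubanalytic.comp (hgn j).1 hT, (hgn j).2⟩, ?_⟩
  dsimp only
  rw [hpe]
  rfl

lemma aux_isSubanalytic_inter_pn {m : ℕ} {X : Set (Fin m → K)} (hX : IsSubanalytic K X)
    {F : (Fin m → K) → K} (hF : IsBasicSubanalytic K F) {n' : ℕ} (hn' : 0 < n') :
    IsSubanalytic K (X ∩ {x | F x ∈ Pn K n'}) := by
  obtain ⟨N, piece, hX1, hX2⟩ := hX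
  refine ⟨N, fun i => piece i ∩ {x | F x ∈ Pn K n'},
    by rw [hX1, Set.iUnion_inter], fun i => ?_⟩
  obtain ⟨f, hf, k, g, nn, hgn, hpe⟩ := hX2 i
  dsimp only
  refine ⟨f, hf, k+1, Fin.snoc g F, Fin.snoc nn n', fun j => ?_, ?_⟩
  · induction j using Fin.lastCases with
    | last => refine ⟨by simpa using hF, by simpa using hn'⟩
    | cast j =>
        refine ⟨by simpa using (hgn j).1, by simpa using (hgn j).2⟩
  · rw [hpe]
    ext x
    simp only [Set.mem_inter_iff, Set.mem_setOf_eq]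
    constructor
    · rintro ⟨⟨hf1, hg1⟩, h3⟩
      refine ⟨hf1, fun j => ?_⟩
      induction j using Fin.lastCases with
      | last => simpa using h3
      | cast j => simpa using hg1 j
    · rintro ⟨hf1, h2⟩
      refine ⟨⟨hf1, fun j => ?_⟩, ?_⟩
      · simpa using h2 j.castSucc
      · simpa using h2 (Fin.last k)

lemma aux_isSubanalytic_biUnion_coset {m : ℕ} {X : Set (Fin m → K)} (hX : IsSubanalytic K X)
    {F : (Fin m → K) → K} (hF : IsBasicSubanalytic K F) {n : ℕ} (hn : 0 < n)
    (C : Finset K) (hC : ∀ c ∈ C, c ≠ 0) :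
    IsSubanalytic K (⋃ c ∈ C, X ∩ {x | F x ∈ cosetPn K c n}) := by
  classical
  induction C using Finset.induction_on with
  | empty => simpa using aux_isSubanalytic_empty m
  | @insert a s ha ih =>
      rw [Finset.set_biUnion_insert]
      refine aux_isSubanalytic_union ?_ (ih fun c hc => hC c (Finset.mem_insert_of_mem hc))
      have ha0 : a ≠ 0 := hC a (Finset.mem_insert_self a s)
      have hrw : X ∩ {x | F x ∈ cosetPn K a n}
          = X ∩ {x | (fun x => a⁻¹ * F x) x ∈ Pn K n} := by
        ext x
        simp only [Set.mem_inter_iff, Set.mem_setOf_eq]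
        exact and_congr_right fun _ => (aux_mem_cosetPn_iff ha0).symm
      rw [hrw]
      exact aux_isSubanalytic_inter_pn hX
        (IsBasicSubanalytic.mul (IsBasicSubanalytic.const _) hF) hn

lemma aux_graph_eq {m : ℕ} (f : (Fin m → K) → K) :
    {y : Fin (m+1) → K | Fin.init y ∈ Set.univ ∧ y (Fin.last m) = f (Fin.init y)} =
    {y : Fin (m+1) → K | y (Fin.last m) = f (Fin.init y)} := by
  ext y; simp

lemma aux_isSubanalyticFun_iff {m : ℕ} (f : (Fin m → K) → K) :
    IsSubanalyticFun K f ↔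
      IsSubanalytic K {y : Fin (m+1) → K | y (Fin.last m) = f (Fin.init y)} := by
  rw [IsSubanalyticFun, IsSubanalyticFunOn, aux_graph_eq]

lemma aux_isSubanalyticFun_const_mul {m : ℕ} {f : (Fin m → K) → K}
    (hf : IsSubanalyticFun K f) {c : K} (hc : c ≠ 0) :
    IsSubanalyticFun K (fun x => c * f x) := by
  rw [aux_isSubanalyticFun_iff] at hf ⊢
  set T : (Fin (m+1) → K) → (Fin (m+1) → K) :=
    fun z => Function.update z (Fin.last m) (c⁻¹ * z (Fin.last m)) with hT
  have hTb : ∀ i, IsBasicSubanalytic K (fun z => T z i) := by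
    intro i
    by_cases h : i = Fin.last m
    · subst h
      have he : (fun z : Fin (m+1) → K => T z (Fin.last m)) =
          fun z => c⁻¹ * z (Fin.last m) := by
        funext z; rw [hT]; simp
      rw [he]
      exact IsBasicSubanalytic.mul (IsBasicSubanalytic.const _) (aux_isBasic_coord _)
    · have he : (fun z : Fin (m+1) → K => T z i) = fun z => z i := by
        funext z; rw [hT]; simp [Function.update_of_ne h]
      rw [he]
      exact aux_isBasic_coord _
  have hset : {y : Fin (m+1) → K | y (Fin.last m) = c * f (Fin.init y)} =
      T ⁻¹' {y : Fin (m+1) → K | y (Fin.last m) = f (Fin.init y)} := by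
    ext z
    simp only [Set.mem_preimage, Set.mem_setOf_eq, hT]
    rw [Function.update_self, Fin.init_update_last]
    exact (inv_mul_eq_iff_eq_mul₀ hc).symm
  rw [hset]
  exact aux_isSubanalytic_preimage hf T hTb

lemma aux_isSubanalyticFun_inv {m : ℕ} {f : (Fin m → K) → K} (hf0 : ∀ x, f x ≠ 0)
    (hf : IsSubanalyticFun K f) : IsSubanalyticFun K (fun x => (f x)⁻¹) := by
  rw [aux_isSubanalyticFun_iff] at hf ⊢
  classical
  set T : (Fin (m+1) → K) → (Fin (m+1) → K) :=
    fun z => Function.update z (Fin.last m)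
      (if z (Fin.last m) = 0 then 0 else (z (Fin.last m))⁻¹) with hT
  have hTb : ∀ i, IsBasicSubanalytic K (fun z => T z i) := by
    intro i
    by_cases h : i = Fin.last m
    · subst h
      have he : (fun z : Fin (m+1) → K => T z (Fin.last m)) =
          fun z => if z (Fin.last m) = 0 then 0 else (z (Fin.last m))⁻¹ := by
        funext z; rw [hT]; simp
      rw [he]
      exact aux_isBasic_invCoord _
    · have he : (fun z : Fin (m+1) → K => T z i) = fun z => z i := by
        funext z; rw [hT]; simp [Function.update_of_ne h]
      rw [he]
      exact aux_isBasic_coord _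
  have hset : {y : Fin (m+1) → K | y (Fin.last m) = (f (Fin.init y))⁻¹} =
      (T ⁻¹' {y : Fin (m+1) → K | y (Fin.last m) = f (Fin.init y)}) ∩
        {z : Fin (m+1) → K | (fun z : Fin (m+1) → K => z (Fin.last m)) z ∈ Pn K 1} := by
    ext z
    simp only [Set.mem_inter_iff, Set.mem_preimage, Set.mem_setOf_eq, hT, aux_mem_pn_one]
    rw [Function.update_self, Fin.init_update_last]
    constructor
    · intro h
      have hz0 : z (Fin.last m) ≠ 0 := by rw [h]; exact inv_ne_zero (hf0 _)
      rw [if_neg hz0, h, inv_inv]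
      exact ⟨rfl, inv_ne_zero (hf0 _)⟩
    · rintro ⟨h1, h2⟩
      rw [if_neg h2] at h1
      rw [← h1, inv_inv]
  rw [hset]
  exact aux_isSubanalytic_inter_pn (aux_isSubanalytic_preimage hf T hTb)
    (aux_isBasic_coord _) one_pos

lemma aux_isSubanalyticFun_ite {m : ℕ} {f : (Fin m → K) → K} (hf0 : ∀ x, f x ≠ 0)
    (hf : IsSubanalyticFun K f) {π : K} (hπ : π ≠ 0) {n : ℕ} (hn : 0 < n)
    (Q : K → Prop) [inst : ∀ y : K, Decidable (Q y)] (C₁ C₂ : Finset K)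
    (h1 : ∀ c ∈ C₁, c ≠ 0) (h2 : ∀ c ∈ C₂, c ≠ 0)
    (hQ1 : ∀ x : K, x ≠ 0 → (Q x ↔ ∃ c ∈ C₁, x ∈ cosetPn K c n))
    (hQ2 : ∀ x : K, x ≠ 0 → (¬ Q x ↔ ∃ c ∈ C₂, x ∈ cosetPn K c n)) :
    IsSubanalyticFun K (fun x => if Q (f x) then f x else π * f x) := by
  classical
  have hG : IsSubanalytic K {y : Fin (m+1) → K | y (Fin.last m) = f (Fin.init y)} :=
    (aux_isSubanalyticFun_iff f).mp hf
  have hGπ : IsSubanalytic K {y : Fin (m+1) → K | y (Fin.last m) = π * f (Fin.init y)} :=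
    (aux_isSubanalyticFun_iff _).mp (aux_isSubanalyticFun_const_mul hf hπ)
  rw [aux_isSubanalyticFun_iff]
  have hset : {y : Fin (m+1) → K |
        y (Fin.last m) = (fun x => if Q (f x) then f x else π * f x) (Fin.init y)} =
      (⋃ c ∈ C₁, {y : Fin (m+1) → K | y (Fin.last m) = f (Fin.init y)} ∩
        {z : Fin (m+1) → K | (fun z : Fin (m+1) → K => z (Fin.last m)) z ∈ cosetPn K c n}) ∪
      (⋃ c ∈ C₂.image (fun c => π * c),
        {y : Fin (m+1) → K | y (Fin.last m) = π * f (Fin.init y)} ∩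
        {z : Fin (m+1) → K | (fun z : Fin (m+1) → K => z (Fin.last m)) z ∈ cosetPn K c n}) := by
    ext z
    simp only [Set.mem_union, Set.mem_iUnion, Set.mem_inter_iff, Set.mem_setOf_eq,
      Finset.mem_image, exists_prop, exists_exists_and_eq_and]
    have ha0 : f (Fin.init z) ≠ 0 := hf0 _
    constructor
    · intro h
      by_cases hQa : Q (f (Fin.init z))
      · rw [if_pos hQa] at h
        obtain ⟨c, hcC, hac⟩ := (hQ1 _ ha0).mp hQa
        exact Or.inl ⟨c, hcC, h, by rw [h]; exact hac⟩
      · rw [if_neg hQa] at h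
        obtain ⟨c, hcC, hac⟩ := (hQ2 _ ha0).mp hQa
        refine Or.inr ⟨c, hcC, h, ?_⟩
        obtain ⟨w, hw, haw⟩ := hac
        exact ⟨w, hw, by rw [h, haw]; ring⟩
    · rintro (⟨c, hcC, hz, hmem⟩ | ⟨c, hcC, hz, hmem⟩)
      · have hQa : Q (f (Fin.init z)) := (hQ1 _ ha0).mpr ⟨c, hcC, by rwa [hz] at hmem⟩
        rw [if_pos hQa]; exact hz
      · have hmem' : f (Fin.init z) ∈ cosetPn K c n := by
          obtain ⟨w, hw, haw⟩ := hmem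
          rw [hz] at haw
          exact ⟨w, hw, mul_left_cancel₀ hπ (by rw [haw]; ring)⟩
        have hQa : ¬ Q (f (Fin.init z)) := (hQ2 _ ha0).mpr ⟨c, hcC, hmem'⟩
        rw [if_neg hQa]; exact hz
  rw [hset]
  refine aux_isSubanalytic_union ?_ ?_
  · exact aux_isSubanalytic_biUnion_coset hG (aux_isBasic_coord _) hn C₁ h1
  · refine aux_isSubanalytic_biUnion_coset hGπ (aux_isBasic_coord _) hn _ ?_
    intro c hc
    obtain ⟨c₀, hc₀, rfl⟩ := Finset.mem_image.mp hc
    exact mul_ne_zero hπ (h2 c₀ hc₀)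

end Aux6
section Aux7

variable {K : Type} [NormedField K]

/-- The indicator of `v(α(x)) ≡ b mod n` as an algebraic expression in the
`q^{-v}`-building blocks of `Ω_an`. -/
lemma aux_indicator (ctx : PadicData K)
    (hu : ∀ x y : K, ‖x + y‖ ≤ max ‖x‖ ‖y‖)
    (hnat : ∀ k : ℕ, ‖(k:K)‖ ≤ 1) (hcompl : CompleteSpace K)
    {m : ℕ} {α : (Fin m → K) → K} (hα0 : ∀ x, α x ≠ 0) (hα : IsSubanalyticFun K α)
    {n : ℕ} (hn : 0 < n) (hchar : (n:K) ≠ 0) (b : ℤ) :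
    ∃ k k' : (Fin m → K) → K,
      IsSubanalyticFun K k ∧ IsSubanalyticFun K k' ∧
      ∀ x, (if ctx.v (α x) ≡ b [ZMOD (n:ℤ)] then (1:ℚ) else 0) =
        (-1/((ctx.q:ℚ)^2 - 1)) + ((ctx.q:ℚ)^2/((ctx.q:ℚ)^2-1)) *
          ((if k x = 0 then 0 else (ctx.q:ℚ)^(-(ctx.v (k x)))) *
           (if k' x = 0 then 0 else (ctx.q:ℚ)^(-(ctx.v (k' x))))) := by
  classical
  obtain ⟨π, hπ0, hπv⟩ := ctx.exists_uniformizer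
  obtain ⟨A₁, A₂, hA₁0, hA₂0, hA₁, hA₂⟩ :=
    aux_exists_coset_finsets ctx hu hnat hcompl hn hchar b
  obtain ⟨B₁, B₂, hB₁0, hB₂0, hB₁, hB₂⟩ :=
    aux_exists_coset_finsets ctx hu hnat hcompl hn hchar (-b)
  refine ⟨fun x => if ctx.v (α x) ≡ b [ZMOD (n:ℤ)] then α x else π * α x,
    fun x => if ctx.v (α x) ≡ b [ZMOD (n:ℤ)] then (α x)⁻¹ else π * (α x)⁻¹, ?_, ?_, ?_⟩
  · exact aux_isSubanalyticFun_ite hα0 hα hπ0 hn _ A₁ A₂ hA₁0 hA₂0 hA₁ hA₂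
  · have h0 : ∀ x, (α x)⁻¹ ≠ 0 := fun x => inv_ne_zero (hα0 x)
    have h1' := aux_isSubanalyticFun_ite h0 (aux_isSubanalyticFun_inv hα0 hα) hπ0 hn
      (fun t => ctx.v t ≡ -b [ZMOD (n:ℤ)]) B₁ B₂ hB₁0 hB₂0 hB₁ hB₂
    have h1 : IsSubanalyticFun K
        (fun x => if ctx.v ((α x)⁻¹) ≡ -b [ZMOD (n:ℤ)] then (α x)⁻¹ else π * (α x)⁻¹) := h1'
    have he : (fun x => if ctx.v ((α x)⁻¹) ≡ -b [ZMOD (n:ℤ)] then (α x)⁻¹ else π * (α x)⁻¹)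
        = fun x => if ctx.v (α x) ≡ b [ZMOD (n:ℤ)] then (α x)⁻¹ else π * (α x)⁻¹ := by
      funext x
      refine if_congr ?_ rfl rfl
      rw [ctx.v_inv (hα0 x)]
      exact aux_neg_modEq
    rwa [he] at h1
  · intro x
    have hq1 : (1:ℚ) < (ctx.q:ℚ) := by exact_mod_cast ctx.one_lt_q
    have hq0 : ((ctx.q:ℚ)) ≠ 0 := by linarith
    have hq21 : ((ctx.q:ℚ))^2 - 1 ≠ 0 := by nlinarith
    set w := ctx.v (α x) with hw
    by_cases hP : ctx.v (α x) ≡ b [ZMOD (n:ℤ)]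
    · simp only [if_pos hP, if_neg (hα0 x), if_neg (inv_ne_zero (hα0 x))]
      rw [ctx.v_inv (hα0 x), ← zpow_add₀ hq0]
      have hfe : (-w) + -(-w) = (0:ℤ) := by ring
      rw [← hw, hfe, zpow_zero, mul_one]
      field_simp
      simp only [if_pos (show w ≡ b [ZMOD (n:ℤ)] from hP)]
      ring
    · simp only [if_neg hP, if_neg (mul_ne_zero hπ0 (hα0 x)),
        if_neg (mul_ne_zero hπ0 (inv_ne_zero (hα0 x)))]
      rw [ctx.v_mul hπ0 (hα0 x), ctx.v_mul hπ0 (inv_ne_zero (hα0 x)),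
        ctx.v_inv (hα0 x), hπv, ← zpow_add₀ hq0]
      rw [← hw]
      have hfe : (-(1 + w)) + (-(1 + -w)) = (-2:ℤ) := by ring
      rw [hfe]
      have h2 : ((ctx.q:ℚ))^(-2:ℤ) = (((ctx.q:ℚ))^2)⁻¹ := by
        rw [zpow_neg, show (2:ℤ) = ((2:ℕ):ℤ) from rfl, zpow_natCast]
      rw [h2]
      field_simp
      simp only [if_neg (show ¬ w ≡ b [ZMOD (n:ℤ)] from hP)]
      ring

end Aux7
theorem statement15 {p : ℕ} [Fact p.Prime] (K : Type) [NormedField K]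
    [Algebra ℚ_[p] K] [FiniteDimensional ℚ_[p] K]
    (hcont : Continuous (algebraMap ℚ_[p] K)) (ctx : PadicData K)
    (m : ℕ) (α β : (Fin m → K) → K)
    (hα0 : ∀ x, α x ≠ 0) (hβ0 : ∀ x, β x ≠ 0)
    (hα : IsSubanalyticFun K α) (hβ : IsSubanalyticFun K β)
    (n : ℕ) (hn : 0 < n) (a₁ a₂ : ℤ) :
    MemOmegaAn K ctx.v ctx.q (fun lam =>
      if ctx.v (α lam) ≡ a₁ [ZMOD (n : ℤ)] ∧ ctx.v (β lam) ≡ a₂ [ZMOD (n : ℤ)]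
      then (1 : ℚ) else 0) := by
  classical
  haveI hch : CharZero K := aux_charZero p K
  have hcompl : CompleteSpace K := aux_complete hcont
  haveI hult : IsUltrametricDist K := aux_ultra hcont
  have hu : ∀ x y : K, ‖x + y‖ ≤ max ‖x‖ ‖y‖ := fun x y =>
    IsUltrametricDist.norm_add_le_max x y
  have hnat : ∀ k : ℕ, ‖(k:K)‖ ≤ 1 := aux_norm_natCast_le_one hcont
  have hchar : ((n:K)) ≠ 0 := Nat.cast_ne_zero.mpr hn.ne'
  obtain ⟨k₁, k₁', hk₁, hk₁', hval₁⟩ :=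
    aux_indicator ctx hu hnat hcompl hα0 hα hn hchar a₁
  obtain ⟨k₂, k₂', hk₂, hk₂', hval₂⟩ :=
    aux_indicator ctx hu hnat hcompl hβ0 hβ hn hchar a₂
  have h1 : MemOmegaAn K ctx.v ctx.q (fun x =>
      (-1/((ctx.q:ℚ)^2 - 1)) + ((ctx.q:ℚ)^2/((ctx.q:ℚ)^2-1)) *
        ((if k₁ x = 0 then 0 else (ctx.q:ℚ)^(-(ctx.v (k₁ x)))) *
         (if k₁' x = 0 then 0 else (ctx.q:ℚ)^(-(ctx.v (k₁' x)))))) :=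
    MemOmegaAn.add (MemOmegaAn.const _) (MemOmegaAn.mul (MemOmegaAn.const _)
      (MemOmegaAn.mul (MemOmegaAn.nrm k₁ hk₁) (MemOmegaAn.nrm k₁' hk₁')))
  have h2 : MemOmegaAn K ctx.v ctx.q (fun x =>
      (-1/((ctx.q:ℚ)^2 - 1)) + ((ctx.q:ℚ)^2/((ctx.q:ℚ)^2-1)) *
        ((if k₂ x = 0 then 0 else (ctx.q:ℚ)^(-(ctx.v (k₂ x)))) *
         (if k₂' x = 0 then 0 else (ctx.q:ℚ)^(-(ctx.v (k₂' x)))))) :=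
    MemOmegaAn.add (MemOmegaAn.const _) (MemOmegaAn.mul (MemOmegaAn.const _)
      (MemOmegaAn.mul (MemOmegaAn.nrm k₂ hk₂) (MemOmegaAn.nrm k₂' hk₂')))
  have hfin := MemOmegaAn.mul h1 h2
  have heq : (fun lam =>
      if ctx.v (α lam) ≡ a₁ [ZMOD (n : ℤ)] ∧ ctx.v (β lam) ≡ a₂ [ZMOD (n : ℤ)]
      then (1 : ℚ) else 0) = fun x =>
      ((-1/((ctx.q:ℚ)^2 - 1)) + ((ctx.q:ℚ)^2/((ctx.q:ℚ)^2-1)) *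
        ((if k₁ x = 0 then 0 else (ctx.q:ℚ)^(-(ctx.v (k₁ x)))) *
         (if k₁' x = 0 then 0 else (ctx.q:ℚ)^(-(ctx.v (k₁' x)))))) *
      ((-1/((ctx.q:ℚ)^2 - 1)) + ((ctx.q:ℚ)^2/((ctx.q:ℚ)^2-1)) *
        ((if k₂ x = 0 then 0 else (ctx.q:ℚ)^(-(ctx.v (k₂ x)))) *
         (if k₂' x = 0 then 0 else (ctx.q:ℚ)^(-(ctx.v (k₂' x)))))) := by
    funext lam
    rw [← hval₁ lam, ← hval₂ lam]
    by_cases hP₁ : ctx.v (α lam) ≡ a₁ [ZMOD (n : ℤ)] <;>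
      by_cases hP₂ : ctx.v (β lam) ≡ a₂ [ZMOD (n : ℤ)] <;>
      simp [hP₁, hP₂]
  rw [heq]
  exact hfin

end PadicCell
end
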